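/- arXiv:1704.05889 — 7 statements merged into one kernel-verified Lean document; each statement's English description precedes it below -/
import Mathlib

section
/- For integers n ≥ 4 and s ≥ 1, there do not exist nonnegative integers a_0, a_1, ..., a_n, a_{n+1} satisfying: (i) the total sum a_0 + a_1 + ... + a_{n+1} ≤ sn - 1, and (ii) for each u ∈ {0, n+1} and each i ∈ {1, ..., n}, a_u + a_i + a_{i+1} + ... + a_{i+n-3} ≥ s(n-2), where indices among {1,...,n} are taken cyclically (x_{n+j} identified with x_j). -/
open Finset

private lemma rot1 (N : ℕ) (a : ℕ → ℕ) :
    ∑ m ∈ range (N+1), a ((m+1) % (N+1)) = ∑ m ∈ range (N+1), a m := by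
  rw [Finset.sum_range_succ, Nat.mod_self, Finset.sum_range_succ']
  congr 1
  apply Finset.sum_congr rfl
  intro m hm
  rw [Nat.mod_eq_of_lt (by simp only [mem_range] at hm; omega)]

private lemma rotk (N k : ℕ) (a : ℕ → ℕ) :
    ∑ m ∈ range (N+1), a ((m+k) % (N+1)) = ∑ m ∈ range (N+1), a m := by
  induction k with
  | zero =>
    apply Finset.sum_congr rfl
    intro m hm
    rw [Nat.mod_eq_of_lt (by simp only [mem_range] at hm; omega)]
    rfl
  | succ k ih =>
    have h1 := rot1 N (fun r => a ((r + k) % (N+1)))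
    have heq : ∀ m, ((m+1) % (N+1) + k) % (N+1) = (m + (k+1)) % (N+1) := by
      intro m
      conv_rhs => rw [show m + (k+1) = (m+1) + k by ring, Nat.add_mod]
      rw [Nat.add_mod ((m+1) % (N+1)) k, Nat.mod_mod_of_dvd _ dvd_rfl]
    calc ∑ m ∈ range (N+1), a ((m + (k+1)) % (N+1))
        = ∑ m ∈ range (N+1), a (((m+1) % (N+1) + k) % (N+1)) := by
          exact Finset.sum_congr rfl fun m _ => by rw [heq]
      _ = ∑ m ∈ range (N+1), a ((m + k) % (N+1)) := h1
      _ = ∑ m ∈ range (N+1), a m := ih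

/-- Key combinatorial lemma for the lower bound of the Waldschmidt constant of the
Stanley-Reisner ideal of the bipyramid `B_n`: there is no exponent vector
`a_0, …, a_{n+1}` of total degree at most `s n - 1` satisfying all `2n` inequalities
`a_u + a_i + a_{i+1} + ⋯ + a_{i+n-3} ≥ s (n-2)` for `u ∈ {0, n+1}` and `i ∈ {1,…,n}`,
indices among `{1,…,n}` taken cyclically. -/
theorem stmt0 (n s : ℕ) (hn : 4 ≤ n) (hs : 1 ≤ s) :
    ¬ ∃ a : ℕ → ℕ,
      (∑ j ∈ Finset.range (n + 2), a j ≤ s * n - 1) ∧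
      (∀ u ∈ ({0, n + 1} : Finset ℕ), ∀ i ∈ Finset.Icc 1 n,
        s * (n - 2) ≤ a u + ∑ k ∈ Finset.range (n - 2), a ((i + k - 1) % n + 1)) := by
  rintro ⟨a, htot, hineq⟩
  set S : ℕ := ∑ m ∈ range n, a (m+1) with hS
  -- the window sum identity
  have hwin : ∑ i ∈ Finset.Icc 1 n, ∑ k ∈ Finset.range (n - 2), a ((i + k - 1) % n + 1)
      = (n - 2) * S := by
    rw [← Finset.Ico_add_one_right_eq_Icc, Finset.sum_Ico_eq_sum_range]
    have : ∀ m k, (1 + m + k - 1) = m + k := by intro m k; omega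
    calc ∑ m ∈ range (n + 1 - 1), ∑ k ∈ range (n - 2), a ((1 + m + k - 1) % n + 1)
        = ∑ m ∈ range n, ∑ k ∈ range (n - 2), a ((m + k) % n + 1) := by
          rw [show n + 1 - 1 = n from rfl]
          exact Finset.sum_congr rfl fun m _ => Finset.sum_congr rfl fun k _ => by rw [this]
      _ = ∑ k ∈ range (n - 2), ∑ m ∈ range n, a ((m + k) % n + 1) := Finset.sum_comm
      _ = ∑ k ∈ range (n - 2), S := by
          apply Finset.sum_congr rfl
          intro k _
          have hrot := rotk (n-1) k (fun r => a (r+1))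
          have hn1 : n - 1 + 1 = n := by omega
          rw [hn1] at hrot
          exact hrot
      _ = (n - 2) * S := by rw [Finset.sum_const, card_range, smul_eq_mul]
  -- key inequality for u ∈ {0, n+1}
  have key : ∀ u, (∀ i ∈ Finset.Icc 1 n,
      s * (n - 2) ≤ a u + ∑ k ∈ Finset.range (n - 2), a ((i + k - 1) % n + 1)) →
      n * (s * (n - 2)) ≤ n * a u + (n - 2) * S := by
    intro u hu
    have := Finset.sum_le_sum hu
    rw [Finset.sum_const, Nat.card_Icc, Finset.sum_add_distrib, Finset.sum_const,
      Nat.card_Icc, hwin, smul_eq_mul, smul_eq_mul] at this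
    simpa using this
  have h0 := key 0 (hineq 0 (by simp))
  have h1 := key (n+1) (hineq (n+1) (by simp))
  -- total sum decomposition
  have hdecomp : ∑ j ∈ Finset.range (n + 2), a j = a 0 + S + a (n+1) := by
    rw [show n + 2 = (n+1) + 1 from rfl, Finset.sum_range_succ, Finset.sum_range_succ']
    ring
  rw [hdecomp] at htot
  have hsn : 1 ≤ s * n := by
    calc 1 ≤ 1 * 4 := by norm_num
    _ ≤ s * n := Nat.mul_le_mul hs hn
  have htot' : a 0 + S + a (n+1) + 1 ≤ s * n := by omega
  -- final contradiction
  obtain ⟨m, rfl⟩ : ∃ m, n = m + 2 := ⟨n - 2, by omega⟩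
  have hm : 2 ≤ m := by omega
  simp only [Nat.add_sub_cancel] at h0 h1
  nlinarith [Nat.mul_le_mul_left (2*m) htot', h0, h1, hm, Nat.zero_le (a 0), Nat.zero_le (a (m+2+1))]
end

section
/- For n ≥ 4 and s ≥ 1, every monomial in the (s(n-2))-th symbolic power of the Stanley-Reisner ideal I_{B_n} of the bipyramid B_n has degree at least sn, where I_{B_n}^{(m)} = ⋂_{u ∈ {0,n+1}} ⋂_{i=1}^{n} ⟨x_u, x_i, ..., x_{i+n-3}⟩^m. -/
open MvPolynomial

private lemma sum_insert_le' {σ : Type*} [DecidableEq σ] (x : σ) (s : Finset σ) (f : σ → ℕ) :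
    ∑ j ∈ insert x s, f j ≤ f x + ∑ j ∈ s, f j := by
  by_cases hx : x ∈ s
  · rw [Finset.insert_eq_self.2 hx]; exact le_add_self
  · rw [Finset.sum_insert hx]

private lemma sum_image_le' {α σ : Type*} [DecidableEq σ] (s : Finset α) (g : α → σ)
    (f : σ → ℕ) : ∑ j ∈ s.image g, f j ≤ ∑ k ∈ s, f (g k) := by
  classical
  induction s using Finset.induction with
  | empty => simp
  | insert _ _ hx ih =>
    rw [Finset.image_insert, Finset.sum_insert hx]
    exact le_trans (sum_insert_le' _ _ _) (by omega)

private lemma mod_helper (n k x : ℕ) (hn : 0 < n) (r : ℕ) (hr : r = k % n) :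
    (x + k + (n - r)) % n = x % n := by
  obtain ⟨q, hq⟩ : ∃ q, n * q = k - r :=
    ⟨k / n, by have := Nat.div_add_mod k n; rw [hr]; omega⟩
  have hrk : r ≤ k := hr ▸ Nat.mod_le k n
  have hrn : r < n := hr ▸ Nat.mod_lt k hn
  have h3 : x + k + (n - r) = x + n * (q + 1) := by
    have : n * (q + 1) = n * q + n := by ring
    omega
  rw [h3, Nat.add_mul_mod_self_left]

private lemma key_lemma {σ : Type*} [DecidableEq σ] (K : Type*) [Field K] (F : Finset σ)
    (m : ℕ) (a : σ →₀ ℕ) (c : K) (hc : c ≠ 0)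
    (h : (monomial a c : MvPolynomial σ K) ∈ (Ideal.span (X '' (↑F : Set σ))) ^ m) :
    m ≤ ∑ j ∈ F, a j := by
  classical
  set φ : MvPolynomial σ K →ₐ[K] Polynomial K :=
    aeval (fun j => if j ∈ F then Polynomial.X else 1) with hφ
  set w : ℕ := ∑ j ∈ a.support, (if j ∈ F then a j else 0) with hwdef
  have hcomp : φ (monomial a c) = Polynomial.C c * Polynomial.X ^ w := by
    rw [hφ, aeval_monomial, Polynomial.algebraMap_eq]
    congr 1
    rw [Finsupp.prod]
    calc ∏ j ∈ a.support, (if j ∈ F then Polynomial.X else (1 : Polynomial K)) ^ a j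
        = ∏ j ∈ a.support, Polynomial.X ^ (if j ∈ F then a j else 0) :=
          Finset.prod_congr rfl (fun j _ => by split <;> simp)
      _ = Polynomial.X ^ w := by rw [Finset.prod_pow_eq_pow_sum, hwdef]
  have hmap : φ (monomial a c) ∈ Ideal.span {(Polynomial.X : Polynomial K) ^ m} := by
    rw [← Ideal.span_singleton_pow]
    have h1 : Ideal.map φ (Ideal.span (X '' (↑F : Set σ))) ≤
        Ideal.span {(Polynomial.X : Polynomial K)} := by
      rw [Ideal.map_span]
      apply Ideal.span_le.2
      rintro p ⟨q, ⟨j, hj, rfl⟩, rfl⟩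
      have hjF : j ∈ F := hj
      have : φ (X j) = Polynomial.X := by
        simp only [hφ, aeval_X, if_pos hjF]
      rw [this]
      exact Ideal.subset_span rfl
    have h2 : φ (monomial a c) ∈ (Ideal.map φ (Ideal.span (X '' (↑F : Set σ)))) ^ m := by
      rw [← Ideal.map_pow]
      exact Ideal.mem_map_of_mem φ h
    exact Ideal.pow_right_mono h1 m h2
  rw [hcomp, Ideal.mem_span_singleton] at hmap
  have hwm : m ≤ w := by
    by_contra hlt
    push_neg at hlt
    have := Polynomial.X_pow_dvd_iff.mp hmap w hlt
    rw [Polynomial.coeff_C_mul, Polynomial.coeff_X_pow, if_pos rfl, mul_one] at this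
    exact hc this
  refine hwm.trans ?_
  rw [hwdef, Finset.sum_ite_mem]
  exact Finset.sum_le_sum_of_subset Finset.inter_subset_right

/-- For `n ≥ 4` and `s ≥ 1`, every monomial in the `(s(n-2))`-th symbolic power of the
Stanley-Reisner ideal `I_{B_n}` of the bipyramid `B_n`, that is, in
`⋂_{u ∈ {0,n+1}} ⋂_{i=1}^{n} ⟨x_u, x_i, …, x_{i+n-3}⟩^(s(n-2))`, has degree at least `sn`. -/
theorem stmt4 (K : Type*) [Field K] (n s : ℕ) (hn : 4 ≤ n) (hs : 1 ≤ s)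
    (e : ℕ → Fin (n + 2)) (he : ∀ k, (e k : ℕ) = k % (n + 2))
    (a : Fin (n + 2) →₀ ℕ) (c : K) (hc : c ≠ 0)
    (hmem : (monomial a c : MvPolynomial (Fin (n + 2)) K) ∈
      ⨅ u ∈ ({0, n + 1} : Finset ℕ), ⨅ i ∈ Finset.Icc 1 n,
        (Ideal.span ({X (e u)} ∪
          {p | ∃ k < n - 2, p = (X (e ((i + k - 1) % n + 1)) : MvPolynomial (Fin (n + 2)) K)}))
          ^ (s * (n - 2))) :
    s * n ≤ ∑ j, a j := by
  classical
  have hn0 : 0 < n := by omega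
  set m := s * (n - 2) with hm
  simp only [Submodule.mem_iInf] at hmem
  -- Step 1: each prime power membership gives a degree constraint
  have H : ∀ u ∈ ({0, n + 1} : Finset ℕ), ∀ i ∈ Finset.Icc 1 n,
      m ≤ a (e u) + ∑ k ∈ Finset.range (n - 2), a (e ((i + k - 1) % n + 1)) := by
    intro u hu i hi
    have hmem' := hmem u hu i hi
    set F : Finset (Fin (n + 2)) :=
      insert (e u) ((Finset.range (n - 2)).image (fun k => e ((i + k - 1) % n + 1))) with hF
    have hset : ({X (e u)} ∪
        {p | ∃ k < n - 2, p = (X (e ((i + k - 1) % n + 1)) : MvPolynomial (Fin (n + 2)) K)})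
        = X '' (↑F : Set (Fin (n + 2))) := by
      ext p
      constructor
      · rintro (rfl | ⟨k, hk, rfl⟩)
        · exact ⟨e u, by simp [hF], rfl⟩
        · refine ⟨e ((i + k - 1) % n + 1), ?_, rfl⟩
          simp only [hF, Finset.coe_insert, Set.mem_insert_iff, Finset.coe_image,
            Set.mem_image, Finset.mem_coe, Finset.mem_range]
          exact Or.inr ⟨k, hk, rfl⟩
      · rintro ⟨j, hj, rfl⟩
        simp only [hF, Finset.coe_insert, Set.mem_insert_iff, Finset.coe_image,
          Set.mem_image, Finset.mem_coe, Finset.mem_range] at hj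
        rcases hj with rfl | ⟨k, hk, rfl⟩
        · exact Or.inl rfl
        · exact Or.inr ⟨k, hk, rfl⟩
    rw [hset] at hmem'
    have h1 := key_lemma K F m a c hc hmem'
    refine h1.trans ?_
    refine le_trans (sum_insert_le' _ _ _) ?_
    exact Nat.add_le_add_left (sum_image_le' _ _ _) _
  -- Step 2: reindexing lemma for the cyclic shift
  have hshift : ∀ k : ℕ, ∑ i ∈ Finset.Icc 1 n, a (e ((i + k - 1) % n + 1))
      = ∑ i ∈ Finset.Icc 1 n, a (e i) := by
    intro k
    set r := k % n with hr
    have hrn : r < n := by rw [hr]; exact Nat.mod_lt k hn0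
    refine Finset.sum_nbij' (i := fun x => (x + k - 1) % n + 1)
      (j := fun x => (x + (n - r) - 1) % n + 1) ?_ ?_ ?_ ?_ ?_
    · intro x hx
      rw [Finset.mem_Icc]
      have := Nat.mod_lt (x + k - 1) hn0
      omega
    · intro x hx
      rw [Finset.mem_Icc]
      have := Nat.mod_lt (x + (n - r) - 1) hn0
      omega
    · intro x hx
      rw [Finset.mem_Icc] at hx
      have hy : ∀ y : ℕ, y + 1 + (n - r) - 1 = y + (n - r) := fun y => by omega
      rw [hy, Nat.mod_add_mod]
      have e2 : x + k - 1 + (n - r) = (x - 1) + k + (n - r) := by omega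
      rw [e2, mod_helper n k (x - 1) hn0 r hr, Nat.mod_eq_of_lt (by omega : x - 1 < n)]
      omega
    · intro x hx
      rw [Finset.mem_Icc] at hx
      have hy : ∀ y : ℕ, y + 1 + k - 1 = y + k := fun y => by omega
      rw [hy, Nat.mod_add_mod]
      have e2 : x + (n - r) - 1 + k = (x - 1) + k + (n - r) := by omega
      rw [e2, mod_helper n k (x - 1) hn0 r hr, Nat.mod_eq_of_lt (by omega : x - 1 < n)]
      omega
    · intro x hx
      dsimp only
  -- Step 3: averaging
  set A := ∑ i ∈ Finset.Icc 1 n, a (e i) with hA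
  have hcard : (Finset.Icc 1 n).card = n := by rw [Nat.card_Icc]; omega
  have hsum : ∀ u ∈ ({0, n + 1} : Finset ℕ), n * m ≤ n * a (e u) + (n - 2) * A := by
    intro u hu
    have h2 : ∑ i ∈ Finset.Icc 1 n, ∑ k ∈ Finset.range (n - 2),
        a (e ((i + k - 1) % n + 1)) = (n - 2) * A := by
      rw [Finset.sum_comm]
      rw [Finset.sum_congr rfl (fun k _ => hshift k), Finset.sum_const, Finset.card_range,
        smul_eq_mul]
    calc n * m = ∑ _i ∈ Finset.Icc 1 n, m := by rw [Finset.sum_const, hcard, smul_eq_mul]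
      _ ≤ ∑ i ∈ Finset.Icc 1 n,
          (a (e u) + ∑ k ∈ Finset.range (n - 2), a (e ((i + k - 1) % n + 1))) :=
        Finset.sum_le_sum (fun i hi => H u hu i hi)
      _ = n * a (e u) + (n - 2) * A := by
        rw [Finset.sum_add_distrib, h2, Finset.sum_const, hcard, smul_eq_mul]
  have h0 : n * m ≤ n * a (e 0) + (n - 2) * A := hsum 0 (by simp)
  have h1 : n * m ≤ n * a (e (n + 1)) + (n - 2) * A := hsum (n + 1) (by simp)
  -- Step 4: total degree decomposition
  have hT : ∑ j, a j = a (e 0) + (a (e (n + 1)) + A) := by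
    have hT1 : ∑ j, a j = ∑ t ∈ Finset.Icc 0 (n + 1), a (e t) := by
      have hev : ∀ j : Fin (n + 2), e (j : ℕ) = j := by
        intro j
        have := he (j : ℕ)
        exact Fin.ext (by rw [this, Nat.mod_eq_of_lt j.isLt])
      refine Finset.sum_nbij' (i := fun j : Fin (n + 2) => (j : ℕ)) (j := fun t => e t)
        ?_ ?_ ?_ ?_ ?_
      · intro x _
        rw [Finset.mem_Icc]
        have := x.isLt
        omega
      · intro x _
        exact Finset.mem_univ _
      · intro x _
        exact hev x
      · intro t ht
        rw [Finset.mem_Icc] at ht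
        rw [he t, Nat.mod_eq_of_lt (by omega)]
      · intro x _
        rw [hev x]
    have hsplit : Finset.Icc 0 (n + 1) = insert 0 (insert (n + 1) (Finset.Icc 1 n)) := by
      ext t
      simp only [Finset.mem_Icc, Finset.mem_insert]
      omega
    rw [hT1, hsplit, Finset.sum_insert (by simp), Finset.sum_insert (by
      rw [Finset.mem_Icc]; omega), hA]
  rw [hT]
  -- Step 5: arithmetic
  by_cases hAbig : s * n ≤ A
  · omega
  push_neg at hAbig
  have hAle : A ≤ s * n := hAbig.le
  obtain ⟨q, hq⟩ : ∃ q, n = q + 4 := ⟨n - 4, by omega⟩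
  set b0 := a (e 0)
  set b1 := a (e (n + 1))
  have hm' : m = s * (q + 2) := by rw [hm]; congr 1; omega
  rw [hq, hm'] at h0 h1
  rw [hq] at hAle
  have hq2 : q + 4 - 2 = q + 2 := by omega
  rw [hq2] at h0 h1
  have c2 : q * A ≤ q * (s * (q + 4)) := Nat.mul_le_mul_left q hAle
  rw [hq]
  nlinarith [h0, h1, c2]
end

section
/- For n ≥ 3, the monomial x_0 x_{n+1} x_1 x_2 ··· x_n of degree n+2 lies in the n-th symbolic power of I_{D_n}, defined as the intersection of the n-th powers of the primes ⟨x_0, x_{n+1}, T_i⟩ (i=1..n), ⟨x_0, S_i⟩ (i=1..n), ⟨x_{n+1}, S_i⟩ (i=1..n), and ⟨x_1, ..., x_n⟩, where S_i = {x_i, ..., x_{i+n-2}} and T_i = {x_i, ..., x_{i+n-3}} with indices in {1,...,n} cyclic modulo n. -/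
open MvPolynomial

lemma prod_mem_pow_card {R : Type*} [CommRing R] {ι : Type*} (I : Ideal R) (s : Finset ι)
    (f : ι → R) (h : ∀ j ∈ s, f j ∈ I) : ∏ j ∈ s, f j ∈ I ^ s.card := by
  induction s using Finset.cons_induction with
  | empty => simp [Ideal.one_eq_top]
  | cons a s ha ih =>
    rw [Finset.prod_cons, Finset.card_cons, pow_succ']
    exact Ideal.mul_mem_mul (h a (Finset.mem_cons_self _ _))
      (ih fun j hj => h j (Finset.mem_cons_of_mem hj))

lemma aux_prod_mem {K : Type*} [Field K] {n i m : ℕ} (hn : 3 ≤ n) (hi : 1 ≤ i) (hm : m ≤ n)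
    (e : ℕ → Fin (n + 2)) (I : Ideal (MvPolynomial (Fin (n + 2)) K))
    (hI : ∀ k < m, (X (e ((i + k - 1) % n + 1)) : MvPolynomial (Fin (n + 2)) K) ∈ I) :
    (∏ j ∈ Finset.Icc 1 n, X (e j) : MvPolynomial (Fin (n + 2)) K) ∈ I ^ m := by
  have hnpos : 0 < n := by omega
  set J : Finset ℕ := (Finset.range m).image (fun k => (i + k - 1) % n + 1) with hJ
  have hsub : J ⊆ Finset.Icc 1 n := by
    intro j hj
    simp only [hJ, Finset.mem_image, Finset.mem_range] at hj
    obtain ⟨k, hk, rfl⟩ := hj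
    have := Nat.mod_lt (i + k - 1) hnpos
    simp only [Finset.mem_Icc]
    omega
  have hinj : Set.InjOn (fun k => (i + k - 1) % n + 1) (Finset.range m) := by
    intro a ha b hb hab
    simp only [Finset.coe_range, Set.mem_Iio] at ha hb
    simp only [Nat.add_right_cancel_iff] at hab
    have ea : i + a - 1 = i - 1 + a := by omega
    have eb : i + b - 1 = i - 1 + b := by omega
    have h1 : (i - 1 + a) % n = (i - 1 + b) % n := by rw [← ea, ← eb]; exact hab
    have h2 : a % n = b % n := Nat.ModEq.add_left_cancel' (i - 1) h1
    rwa [Nat.mod_eq_of_lt (by omega), Nat.mod_eq_of_lt (by omega)] at h2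
  have hcard : J.card = m := by
    rw [hJ, Finset.card_image_of_injOn hinj, Finset.card_range]
  have hprod : (∏ j ∈ J, X (e j) : MvPolynomial (Fin (n + 2)) K) ∈ I ^ m := by
    rw [← hcard]
    refine prod_mem_pow_card I J _ (fun j hj => ?_)
    simp only [hJ, Finset.mem_image, Finset.mem_range] at hj
    obtain ⟨k, hk, rfl⟩ := hj
    exact hI k hk
  rw [← Finset.prod_sdiff hsub]
  exact Ideal.mul_mem_left _ _ hprod

/-- For `n ≥ 3`, the monomial `x_0 x_{n+1} x_1 ⋯ x_n` (of degree `n+2`) lies in the `n`-th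
symbolic power of `I_{D_n}`, i.e. in the intersection of the `n`-th powers of the primes
`⟨x_0, x_{n+1}, T_i⟩`, `⟨x_0, S_i⟩`, `⟨x_{n+1}, S_i⟩` (for `i = 1,…,n`) and
`⟨x_1,…,x_n⟩`, where `S_i = {x_i,…,x_{i+n-2}}` and `T_i = {x_i,…,x_{i+n-3}}` with cyclic
indices modulo `n` in `{1,…,n}`. -/
theorem stmt10 (K : Type*) [Field K] (n : ℕ) (hn : 3 ≤ n)
    (e : ℕ → Fin (n + 2)) (he : ∀ k, (e k : ℕ) = k % (n + 2)) :
    (X (e 0) * X (e (n + 1)) * ∏ j ∈ Finset.Icc 1 n, X (e j) : MvPolynomial (Fin (n + 2)) K) ∈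
      (⨅ i ∈ Finset.Icc 1 n,
        (Ideal.span ({X (e 0), X (e (n + 1))} ∪
          {p | ∃ k < n - 2, p = (X (e ((i + k - 1) % n + 1)) : MvPolynomial (Fin (n + 2)) K)}))
          ^ n) ⊓
      (⨅ i ∈ Finset.Icc 1 n,
        (Ideal.span ({X (e 0)} ∪
          {p | ∃ k < n - 1, p = (X (e ((i + k - 1) % n + 1)) : MvPolynomial (Fin (n + 2)) K)}))
          ^ n) ⊓
      (⨅ i ∈ Finset.Icc 1 n,
        (Ideal.span ({X (e (n + 1))} ∪
          {p | ∃ k < n - 1, p = (X (e ((i + k - 1) % n + 1)) : MvPolynomial (Fin (n + 2)) K)}))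
          ^ n) ⊓
      (Ideal.span {p | ∃ j ∈ Finset.Icc 1 n, p = (X (e j) : MvPolynomial (Fin (n + 2)) K)})
        ^ n := by
  rw [Submodule.mem_inf, Submodule.mem_inf, Submodule.mem_inf]
  refine ⟨⟨⟨?_, ?_⟩, ?_⟩, ?_⟩
  · -- ⟨x0, x_{n+1}, T_i⟩
    simp only [Submodule.mem_iInf]
    intro i hi
    simp only [Finset.mem_Icc] at hi
    set I : Ideal (MvPolynomial (Fin (n + 2)) K) :=
      Ideal.span ({X (e 0), X (e (n + 1))} ∪
        {p | ∃ k < n - 2, p = (X (e ((i + k - 1) % n + 1)) : MvPolynomial (Fin (n + 2)) K)})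
      with hIdef
    have h0 : (X (e 0) : MvPolynomial (Fin (n + 2)) K) ∈ I :=
      Ideal.subset_span (Or.inl (Or.inl rfl))
    have h1 : (X (e (n + 1)) : MvPolynomial (Fin (n + 2)) K) ∈ I :=
      Ideal.subset_span (Or.inl (Or.inr rfl))
    have haux : (∏ j ∈ Finset.Icc 1 n, X (e j) : MvPolynomial (Fin (n + 2)) K) ∈ I ^ (n - 2) :=
      aux_prod_mem hn hi.1 (by omega) e I
        (fun k hk => Ideal.subset_span (Or.inr ⟨k, hk, rfl⟩))
    have hpow : I * I * I ^ (n - 2) = I ^ n := by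
      rw [← sq, ← pow_add]
      congr 1
      omega
    rw [← hpow]
    exact Ideal.mul_mem_mul (Ideal.mul_mem_mul h0 h1) haux
  · -- ⟨x0, S_i⟩
    simp only [Submodule.mem_iInf]
    intro i hi
    simp only [Finset.mem_Icc] at hi
    set I : Ideal (MvPolynomial (Fin (n + 2)) K) :=
      Ideal.span ({X (e 0)} ∪
        {p | ∃ k < n - 1, p = (X (e ((i + k - 1) % n + 1)) : MvPolynomial (Fin (n + 2)) K)})
      with hIdef
    have h0 : (X (e 0) : MvPolynomial (Fin (n + 2)) K) ∈ I :=
      Ideal.subset_span (Or.inl rfl)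
    have haux : (∏ j ∈ Finset.Icc 1 n, X (e j) : MvPolynomial (Fin (n + 2)) K) ∈ I ^ (n - 1) :=
      aux_prod_mem hn hi.1 (by omega) e I
        (fun k hk => Ideal.subset_span (Or.inr ⟨k, hk, rfl⟩))
    have hpow : I * I ^ (n - 1) = I ^ n := by
      rw [← pow_succ']
      congr 1
      omega
    have heq : (X (e 0) * X (e (n + 1)) * ∏ j ∈ Finset.Icc 1 n, X (e j)
        : MvPolynomial (Fin (n + 2)) K)
        = X (e (n + 1)) * (X (e 0) * ∏ j ∈ Finset.Icc 1 n, X (e j)) := by ring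
    rw [heq, ← hpow]
    exact Ideal.mul_mem_left _ _ (Ideal.mul_mem_mul h0 haux)
  · -- ⟨x_{n+1}, S_i⟩
    simp only [Submodule.mem_iInf]
    intro i hi
    simp only [Finset.mem_Icc] at hi
    set I : Ideal (MvPolynomial (Fin (n + 2)) K) :=
      Ideal.span ({X (e (n + 1))} ∪
        {p | ∃ k < n - 1, p = (X (e ((i + k - 1) % n + 1)) : MvPolynomial (Fin (n + 2)) K)})
      with hIdef
    have h0 : (X (e (n + 1)) : MvPolynomial (Fin (n + 2)) K) ∈ I :=
      Ideal.subset_span (Or.inl rfl)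
    have haux : (∏ j ∈ Finset.Icc 1 n, X (e j) : MvPolynomial (Fin (n + 2)) K) ∈ I ^ (n - 1) :=
      aux_prod_mem hn hi.1 (by omega) e I
        (fun k hk => Ideal.subset_span (Or.inr ⟨k, hk, rfl⟩))
    have hpow : I * I ^ (n - 1) = I ^ n := by
      rw [← pow_succ']
      congr 1
      omega
    have heq : (X (e 0) * X (e (n + 1)) * ∏ j ∈ Finset.Icc 1 n, X (e j)
        : MvPolynomial (Fin (n + 2)) K)
        = X (e 0) * (X (e (n + 1)) * ∏ j ∈ Finset.Icc 1 n, X (e j)) := by ring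
    rw [heq, ← hpow]
    exact Ideal.mul_mem_left _ _ (Ideal.mul_mem_mul h0 haux)
  · -- ⟨x_1, …, x_n⟩
    have hcard : (Finset.Icc 1 n).card = n := by rw [Nat.card_Icc]; omega
    have hprod : (∏ j ∈ Finset.Icc 1 n, X (e j) : MvPolynomial (Fin (n + 2)) K) ∈
        (Ideal.span {p | ∃ j ∈ Finset.Icc 1 n,
          p = (X (e j) : MvPolynomial (Fin (n + 2)) K)}) ^ n := by
      have := prod_mem_pow_card
        (Ideal.span {p | ∃ j ∈ Finset.Icc 1 n,
          p = (X (e j) : MvPolynomial (Fin (n + 2)) K)}) (Finset.Icc 1 n) (fun j => X (e j))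
        (fun j hj => Ideal.subset_span ⟨j, hj, rfl⟩)
      rwa [hcard] at this
    rw [mul_assoc]
    exact Ideal.mul_mem_left _ _ (Ideal.mul_mem_left _ _ hprod)
end

section
/- For integers n ≥ 3 and s ≥ 1, there do not exist nonnegative integers a_0, a_1, ..., a_n, a_{n+1} such that: (i) a_0 + a_1 + ... + a_{n+1} ≤ s(n+2) - 1, and (ii) for every i ∈ {0, 1, ..., n+1}, the sum of all a_j except a_i and a_{i+1} (indices modulo n+2) is at least sn. -/
lemma shift_sum (m : ℕ) (hm : 0 < m) (a : ℕ → ℕ) :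
    ∑ i ∈ Finset.range m, a ((i + 1) % m) = ∑ j ∈ Finset.range m, a j := by
  apply Finset.sum_nbij' (fun i => (i + 1) % m) (fun j => (j + (m - 1)) % m)
  · intro i hi; exact Finset.mem_range.mpr (Nat.mod_lt _ hm)
  · intro j hj; exact Finset.mem_range.mpr (Nat.mod_lt _ hm)
  · intro i hi
    simp only [Finset.mem_range] at hi
    rcases Nat.lt_or_ge (i + 1) m with h | h
    · rw [Nat.mod_eq_of_lt h]
      have e : i + 1 + (m - 1) = i + m := by omega
      rw [e, Nat.add_mod_right, Nat.mod_eq_of_lt hi]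
    · have e : i + 1 = m := by omega
      rw [e, Nat.mod_self, Nat.zero_add, Nat.mod_eq_of_lt (by omega)]
      omega
  · intro j hj
    simp only [Finset.mem_range] at hj
    rcases Nat.eq_zero_or_pos j with h | h
    · subst h
      have e : m - 1 + 1 = m := by omega
      rw [Nat.zero_add, Nat.mod_eq_of_lt (Nat.sub_lt hm one_pos), e, Nat.mod_self]
    · have e : j + (m - 1) = (j - 1) + m := by omega
      have h1 : (j - 1) % m = j - 1 := Nat.mod_eq_of_lt (by omega)
      have e2 : j - 1 + 1 = j := by omega
      rw [e, Nat.add_mod_right, h1, e2, Nat.mod_eq_of_lt hj]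
  · intro i _; rfl

/-- Key combinatorial lemma for the lower bound of the Waldschmidt constant of the
bipyramidal graph ideal `I_{D_n}`: there are no nonnegative integers `a_0, …, a_{n+1}`
with total sum at most `s(n+2) - 1` such that for every `i ∈ {0,…,n+1}` the sum of all
`a_j` except `a_i` and `a_{i+1}` (indices modulo `n+2`) is at least `sn`. -/
theorem stmt11 (n s : ℕ) (hn : 3 ≤ n) (hs : 1 ≤ s) :
    ¬ ∃ a : ℕ → ℕ,
      (∑ j ∈ Finset.range (n + 2), a j ≤ s * (n + 2) - 1) ∧
      (∀ i ∈ Finset.range (n + 2),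
        s * n ≤ ∑ j ∈ ((Finset.range (n + 2)).erase i).erase ((i + 1) % (n + 2)), a j) := by
  rintro ⟨a, hsum, hii⟩
  set m := n + 2 with hm
  set T := ∑ j ∈ Finset.range m, a j with hT
  have key : ∀ i ∈ Finset.range m, s * n + a i + a ((i + 1) % m) ≤ T := by
    intro i hi
    have hine := hii i hi
    have hmem : (i + 1) % m ∈ (Finset.range m).erase i := by
      simp only [Finset.mem_erase, Finset.mem_range]
      constructor
      · simp only [Finset.mem_range] at hi
        rcases Nat.lt_or_ge (i + 1) m with h | h
        · rw [Nat.mod_eq_of_lt h]; omega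
        · have : i + 1 = m := by omega
          rw [this, Nat.mod_self]; omega
      · exact Nat.mod_lt _ (by omega)
    have e1 := Finset.sum_erase_add _ a hmem
    have e2 := Finset.sum_erase_add _ a hi
    omega
  have total : ∑ i ∈ Finset.range m, (s * n + a i + a ((i + 1) % m)) ≤ m * T := by
    calc ∑ i ∈ Finset.range m, (s * n + a i + a ((i + 1) % m))
        ≤ ∑ _i ∈ Finset.range m, T := Finset.sum_le_sum key
      _ = m * T := by simp [mul_comm]
  rw [Finset.sum_add_distrib, Finset.sum_add_distrib, shift_sum m (by omega) a,
    Finset.sum_const, Finset.card_range, smul_eq_mul] at total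
  -- total : m * (s*n) + T + T ≤ m * T
  rw [← hT] at total
  have hsm : 0 < s * m := Nat.mul_pos hs (by omega)
  have hT1 : T + 1 ≤ s * m := by omega
  have hmn : m = n + 2 := hm
  nlinarith [total, hT1, hs, hn]
end

section
/- For n ≥ 3 and s ≥ 1, every monomial in the (sn)-th symbolic power of I_{D_n} has degree at least s(n+2), where the symbolic power is the intersection of the (sn)-th powers of the primes in the decomposition of I_{D_n}. -/
open MvPolynomial

lemma modc (x n : ℕ) (hn : 0 < n) (h : x < 2 * n) :
    ∃ m, x % n = m ∧ (m = x ∨ m + n = x) ∧ m < n := by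
  refine ⟨x % n, rfl, ?_, Nat.mod_lt _ hn⟩
  rcases Nat.lt_or_ge x n with h1 | h1
  · exact Or.inl (Nat.mod_eq_of_lt h1)
  · right
    rw [Nat.mod_eq_sub_mod h1, Nat.mod_eq_of_lt (by omega)]
    omega

lemma key_lemma_s14 {K : Type*} [Field K] {N : ℕ}
    (P : Fin N → Prop) [DecidablePred P] {S : Set (MvPolynomial (Fin N) K)}
    (hS : ∀ q ∈ S, ∃ v, P v ∧ q = X v) (m : ℕ) (a : Fin N →₀ ℕ) (c : K) (hc : c ≠ 0)
    (h : (monomial a c : MvPolynomial (Fin N) K) ∈ (Ideal.span S) ^ m) :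
    m ≤ ∑ i, if P i then a i else 0 := by
  classical
  set f : Fin N → Polynomial K := fun i => if P i then Polynomial.X else 1 with hf
  have h1 : (aeval f) (monomial a c) ∈ (Ideal.map (aeval f) (Ideal.span S)) ^ m := by
    rw [← Ideal.map_pow]
    exact Ideal.mem_map_of_mem _ h
  have h2 : Ideal.map (aeval f) (Ideal.span S) ≤ Ideal.span {(Polynomial.X : Polynomial K)} := by
    rw [Ideal.map_span, Ideal.span_le]
    rintro q ⟨q', hq', rfl⟩
    obtain ⟨v, hv, rfl⟩ := hS q' hq'
    simp only [aeval_X, hf, if_pos hv]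
    exact Ideal.subset_span rfl
  have h3 : (aeval f) (monomial a c) ∈ Ideal.span {(Polynomial.X : Polynomial K)} ^ m :=
    Ideal.pow_right_mono h2 m h1
  rw [Ideal.span_singleton_pow, Ideal.mem_span_singleton] at h3
  have h4 : (aeval f) (monomial a c)
      = Polynomial.C c * Polynomial.X ^ (∑ i, if P i then a i else 0) := by
    rw [aeval_monomial]
    have h5 : (a.prod fun i k => f i ^ k)
        = Polynomial.X ^ (∑ i ∈ a.support, if P i then a i else 0) := by
      rw [Finsupp.prod, ← Finset.prod_pow_eq_pow_sum]
      apply Finset.prod_congr rfl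
      intro i _
      by_cases hv : P i <;> simp [hf, hv]
    rw [h5, Finset.sum_subset (Finset.subset_univ a.support), Polynomial.algebraMap_eq]
    intro i _ hi
    simp [Finsupp.notMem_support_iff.mp hi]
  rw [h4] at h3
  have h6 := Polynomial.natDegree_le_of_dvd h3
    (mul_ne_zero (Polynomial.C_ne_zero.mpr hc) (pow_ne_zero _ Polynomial.X_ne_zero))
  rwa [Polynomial.natDegree_X_pow, Polynomial.natDegree_C_mul_X_pow _ _ hc] at h6


/-- For `n ≥ 3` and `s ≥ 1`, every monomial in the `(sn)`-th symbolic power of `I_{D_n}`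
(the intersection of the `(sn)`-th powers of the primes `⟨x_0, x_{n+1}, T_i⟩`,
`⟨x_0, S_i⟩`, `⟨x_{n+1}, S_i⟩` for `i = 1,…,n` and `⟨x_1,…,x_n⟩`, with
`S_i = {x_i,…,x_{i+n-2}}`, `T_i = {x_i,…,x_{i+n-3}}`, cyclic indices modulo `n`) has
degree at least `s(n+2)`. -/
theorem stmt14 (K : Type*) [Field K] (n s : ℕ) (hn : 3 ≤ n) (hs : 1 ≤ s)
    (e : ℕ → Fin (n + 2)) (he : ∀ k, (e k : ℕ) = k % (n + 2))
    (a : Fin (n + 2) →₀ ℕ) (c : K) (hc : c ≠ 0)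
    (hmem : (monomial a c : MvPolynomial (Fin (n + 2)) K) ∈
      (⨅ i ∈ Finset.Icc 1 n,
        (Ideal.span ({X (e 0), X (e (n + 1))} ∪
          {p | ∃ k < n - 2, p = (X (e ((i + k - 1) % n + 1)) : MvPolynomial (Fin (n + 2)) K)}))
          ^ (s * n)) ⊓
      (⨅ i ∈ Finset.Icc 1 n,
        (Ideal.span ({X (e 0)} ∪
          {p | ∃ k < n - 1, p = (X (e ((i + k - 1) % n + 1)) : MvPolynomial (Fin (n + 2)) K)}))
          ^ (s * n)) ⊓
      (⨅ i ∈ Finset.Icc 1 n,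
        (Ideal.span ({X (e (n + 1))} ∪
          {p | ∃ k < n - 1, p = (X (e ((i + k - 1) % n + 1)) : MvPolynomial (Fin (n + 2)) K)}))
          ^ (s * n)) ⊓
      (Ideal.span {p | ∃ j ∈ Finset.Icc 1 n, p = (X (e j) : MvPolynomial (Fin (n + 2)) K)})
        ^ (s * n)) :
    s * (n + 2) ≤ ∑ j, a j := by

  classical
  simp only [Submodule.mem_inf, Submodule.mem_iInf] at hmem
  obtain ⟨⟨⟨hA, hB⟩, hC⟩, hD⟩ := hmem
  have hn2 : (0:ℕ) < n + 2 := by omega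
  have hn0 : (0:ℕ) < n := by omega
  have e_ne : ∀ A B : ℕ, A % (n+2) ≠ B % (n+2) → e A ≠ e B := by
    intro A B h hAB
    exact h (by rw [← he, ← he, hAB])
  have main : ∀ p, p < n + 2 → s * n + a (e p) + a (e (p + 1)) ≤ ∑ j, a j := by
    intro p hp
    have hkey : s * n ≤ ∑ i : Fin (n+2), if i ≠ e p ∧ i ≠ e (p+1) then a i else 0 := by
      by_cases hp0 : p = 0
      · -- pair (0,1): use hC with i = 2
        refine key_lemma_s14 _ ?_ (s*n) a c hc (hC 2 (by rw [Finset.mem_Icc]; omega))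
        intro q hq
        simp only [Set.mem_union, Set.mem_singleton_iff, Set.mem_setOf_eq] at hq
        rcases hq with rfl | ⟨k, hk, rfl⟩
        · refine ⟨e (n+1), ⟨e_ne _ _ ?_, e_ne _ _ ?_⟩, rfl⟩
          · obtain ⟨m1, e1, c1, b1⟩ := modc (n+1) (n+2) hn2 (by omega)
            obtain ⟨m2, e2, c2, b2⟩ := modc p (n+2) hn2 (by omega)
            rw [e1, e2]; omega
          · obtain ⟨m1, e1, c1, b1⟩ := modc (n+1) (n+2) hn2 (by omega)
            obtain ⟨m2, e2, c2, b2⟩ := modc (p+1) (n+2) hn2 (by omega)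
            rw [e1, e2]; omega
        · rw [show 2 + k - 1 = k + 1 from by omega]
          obtain ⟨m1, e1, c1, b1⟩ := modc (k+1) n hn0 (by omega)
          rw [e1]
          refine ⟨e (m1 + 1), ⟨e_ne _ _ ?_, e_ne _ _ ?_⟩, rfl⟩
          · obtain ⟨m2, e2, c2, b2⟩ := modc (m1+1) (n+2) hn2 (by omega)
            obtain ⟨m3, e3, c3, b3⟩ := modc p (n+2) hn2 (by omega)
            rw [e2, e3]; omega
          · obtain ⟨m2, e2, c2, b2⟩ := modc (m1+1) (n+2) hn2 (by omega)
            obtain ⟨m3, e3, c3, b3⟩ := modc (p+1) (n+2) hn2 (by omega)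
            rw [e2, e3]; omega
      · by_cases hpn : p = n
        · -- pair (n, n+1): use hB with i = 1
          refine key_lemma_s14 _ ?_ (s*n) a c hc (hB 1 (by rw [Finset.mem_Icc]; omega))
          intro q hq
          simp only [Set.mem_union, Set.mem_singleton_iff, Set.mem_setOf_eq] at hq
          rcases hq with rfl | ⟨k, hk, rfl⟩
          · refine ⟨e 0, ⟨e_ne _ _ ?_, e_ne _ _ ?_⟩, rfl⟩
            · obtain ⟨m1, e1, c1, b1⟩ := modc 0 (n+2) hn2 (by omega)
              obtain ⟨m2, e2, c2, b2⟩ := modc p (n+2) hn2 (by omega)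
              rw [e1, e2]; omega
            · obtain ⟨m1, e1, c1, b1⟩ := modc 0 (n+2) hn2 (by omega)
              obtain ⟨m2, e2, c2, b2⟩ := modc (p+1) (n+2) hn2 (by omega)
              rw [e1, e2]; omega
          · rw [show 1 + k - 1 = k from by omega]
            obtain ⟨m1, e1, c1, b1⟩ := modc k n hn0 (by omega)
            rw [e1]
            refine ⟨e (m1 + 1), ⟨e_ne _ _ ?_, e_ne _ _ ?_⟩, rfl⟩
            · obtain ⟨m2, e2, c2, b2⟩ := modc (m1+1) (n+2) hn2 (by omega)
              obtain ⟨m3, e3, c3, b3⟩ := modc p (n+2) hn2 (by omega)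
              rw [e2, e3]; omega
            · obtain ⟨m2, e2, c2, b2⟩ := modc (m1+1) (n+2) hn2 (by omega)
              obtain ⟨m3, e3, c3, b3⟩ := modc (p+1) (n+2) hn2 (by omega)
              rw [e2, e3]; omega
        · by_cases hpn1 : p = n + 1
          · -- pair (n+1, 0): use hD
            refine key_lemma_s14 _ ?_ (s*n) a c hc hD
            intro q hq
            simp only [Set.mem_setOf_eq] at hq
            obtain ⟨j, hj, rfl⟩ := hq
            rw [Finset.mem_Icc] at hj
            refine ⟨e j, ⟨e_ne _ _ ?_, e_ne _ _ ?_⟩, rfl⟩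
            · obtain ⟨m1, e1, c1, b1⟩ := modc j (n+2) hn2 (by omega)
              obtain ⟨m2, e2, c2, b2⟩ := modc p (n+2) hn2 (by omega)
              rw [e1, e2]; omega
            · obtain ⟨m1, e1, c1, b1⟩ := modc j (n+2) hn2 (by omega)
              obtain ⟨m2, e2, c2, b2⟩ := modc (p+1) (n+2) hn2 (by omega)
              rw [e1, e2]; omega
          · -- 1 ≤ p ≤ n-1: use hA with i = (p+1) % n + 1
            have hpb : 1 ≤ p ∧ p ≤ n - 1 := by omega
            obtain ⟨mi, ei, ci, bi⟩ := modc (p+1) n hn0 (by omega)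
            refine key_lemma_s14 _ ?_ (s*n) a c hc
              (hA ((p+1) % n + 1) (by rw [Finset.mem_Icc]; omega))
            intro q hq
            simp only [Set.mem_union, Set.mem_insert_iff, Set.mem_singleton_iff,
              Set.mem_setOf_eq] at hq
            rcases hq with (rfl | rfl) | ⟨k, hk, rfl⟩
            · refine ⟨e 0, ⟨e_ne _ _ ?_, e_ne _ _ ?_⟩, rfl⟩
              · obtain ⟨m1, e1, c1, b1⟩ := modc 0 (n+2) hn2 (by omega)
                obtain ⟨m2, e2, c2, b2⟩ := modc p (n+2) hn2 (by omega)
                rw [e1, e2]; omega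
              · obtain ⟨m1, e1, c1, b1⟩ := modc 0 (n+2) hn2 (by omega)
                obtain ⟨m2, e2, c2, b2⟩ := modc (p+1) (n+2) hn2 (by omega)
                rw [e1, e2]; omega
            · refine ⟨e (n+1), ⟨e_ne _ _ ?_, e_ne _ _ ?_⟩, rfl⟩
              · obtain ⟨m1, e1, c1, b1⟩ := modc (n+1) (n+2) hn2 (by omega)
                obtain ⟨m2, e2, c2, b2⟩ := modc p (n+2) hn2 (by omega)
                rw [e1, e2]; omega
              · obtain ⟨m1, e1, c1, b1⟩ := modc (n+1) (n+2) hn2 (by omega)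
                obtain ⟨m2, e2, c2, b2⟩ := modc (p+1) (n+2) hn2 (by omega)
                rw [e1, e2]; omega
            · rw [ei, show mi + 1 + k - 1 = mi + k from by omega]
              obtain ⟨m1, e1, c1, b1⟩ := modc (mi + k) n hn0 (by omega)
              rw [e1]
              refine ⟨e (m1 + 1), ⟨e_ne _ _ ?_, e_ne _ _ ?_⟩, rfl⟩
              · obtain ⟨m2, e2, c2, b2⟩ := modc (m1+1) (n+2) hn2 (by omega)
                obtain ⟨m3, e3, c3, b3⟩ := modc p (n+2) hn2 (by omega)
                rw [e2, e3]; omega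
              · obtain ⟨m2, e2, c2, b2⟩ := modc (m1+1) (n+2) hn2 (by omega)
                obtain ⟨m3, e3, c3, b3⟩ := modc (p+1) (n+2) hn2 (by omega)
                rw [e2, e3]; omega
    -- combine hkey with splitting the total sum
    have hpp : e p ≠ e (p+1) := by
      apply e_ne
      obtain ⟨m1, e1, c1, b1⟩ := modc p (n+2) hn2 (by omega)
      obtain ⟨m2, e2, c2, b2⟩ := modc (p+1) (n+2) hn2 (by omega)
      rw [e1, e2]; omega
    have hrew : ∀ j : Fin (n+2), (if j ≠ e p ∧ j ≠ e (p+1) then 0 else a j)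
        = if j ∈ ({e p, e (p+1)} : Finset (Fin (n+2))) then a j else 0 := by
      intro j
      by_cases h1 : j = e p <;> by_cases h2 : j = e (p+1) <;>
        simp [h1, h2]
    have hsplit : ∑ j, a j
        = (∑ i : Fin (n+2), if i ≠ e p ∧ i ≠ e (p+1) then a i else 0)
          + (a (e p) + a (e (p+1))) := by
      have h1 : ∀ j : Fin (n+2), a j = (if j ≠ e p ∧ j ≠ e (p+1) then a j else 0)
          + (if j ≠ e p ∧ j ≠ e (p+1) then 0 else a j) := by
        intro j; by_cases h : j ≠ e p ∧ j ≠ e (p+1) <;> simp [h]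
      rw [Finset.sum_congr rfl (fun j _ => h1 j), Finset.sum_add_distrib]
      congr 1
      rw [Finset.sum_congr rfl (fun j _ => hrew j), Finset.sum_ite_mem,
        Finset.univ_inter, Finset.sum_pair hpp]
    omega
  -- sum the n+2 inequalities
  have hsum1 : ∑ p ∈ Finset.range (n+2), a (e p) = ∑ j, a j := by
    rw [← Fin.sum_univ_eq_sum_range (fun p => a (e p)) (n+2)]
    refine Finset.sum_congr rfl fun j _ => ?_
    congr 1
    exact Fin.ext (by rw [he]; exact Nat.mod_eq_of_lt j.isLt)
  have hsum2 : ∑ p ∈ Finset.range (n+2), a (e (p+1)) = ∑ j, a j := by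
    have h1 := Finset.sum_range_succ (fun p => a (e p)) (n+2)
    have h2 := Finset.sum_range_succ' (fun p => a (e p)) (n+2)
    have h3 : a (e (n+2)) = a (e 0) := by
      congr 1
      exact Fin.ext (by rw [he, he]; simp)
    omega
  have hfinal := Finset.sum_le_sum (s := Finset.range (n+2))
    (f := fun p => s * n + a (e p) + a (e (p+1))) (g := fun _ => ∑ j, a j)
    (fun p hp => main p (Finset.mem_range.mp hp))
  simp only [Finset.sum_add_distrib, Finset.sum_const, Finset.card_range,
    smul_eq_mul] at hfinal
  rw [hsum1, hsum2] at hfinal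
  have hr1 : (n+2) * (s*n) = n * (s * (n+2)) := by ring
  have hr2 : (n+2) * (∑ j, a j) = n * (∑ j, a j) + 2 * (∑ j, a j) := by ring
  have hmul : n * (s * (n+2)) ≤ n * (∑ j, a j) := by omega
  exact Nat.le_of_mul_le_mul_left hmul hn0
end

section
/- For n ≥ 3, the Waldschmidt constant of the Stanley-Reisner ideal I_{D_n} of the bipyramidal graph D_n equals (n+2)/n; that is, inf_{m ≥ 1} α(I_{D_n}^{(m)})/m = (n+2)/n. -/
open MvPolynomial



section auxWald
open Finset

variable {K : Type*} [Field K] {N : ℕ}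

/-- Ideal of polynomials all of whose monomials have weighted degree ≥ m. -/
def wId (K : Type*) [Field K] (N : ℕ) (c : Fin N → ℕ) (m : ℕ) :
    Ideal (MvPolynomial (Fin N) K) where
  carrier := {f | ∀ s ∈ f.support, m ≤ ∑ v, c v * s v}
  zero_mem' := by simp
  add_mem' := by
    intro a b ha hb s hs
    rcases Finset.mem_union.1 (MvPolynomial.support_add hs) with h | h
    · exact ha s h
    · exact hb s h
  smul_mem' := by
    intro g f hf s hs
    rw [smul_eq_mul] at hs
    rcases Finset.mem_add.1 (MvPolynomial.support_mul g f hs) with ⟨u, hu, t, ht, rfl⟩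
    calc m ≤ ∑ v, c v * t v := hf t ht
    _ ≤ ∑ v, c v * (u + t) v := by
        refine Finset.sum_le_sum fun v _ => ?_
        simp only [Finsupp.add_apply, mul_add]
        omega

theorem wId_mul_le (c : Fin N → ℕ) (a b : ℕ) :
    wId K N c a * wId K N c b ≤ wId K N c (a + b) := by
  rw [Ideal.mul_le]
  intro f hf g hg s hs
  rcases Finset.mem_add.1 (MvPolynomial.support_mul f g hs) with ⟨u, hu, t, ht, rfl⟩
  have h1 := hf u hu
  have h2 := hg t ht
  have : ∑ v, c v * (u + t) v = (∑ v, c v * u v) + ∑ v, c v * t v := by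
    rw [← Finset.sum_add_distrib]
    refine Finset.sum_congr rfl fun v _ => ?_
    simp [Finsupp.add_apply, mul_add]
  omega

theorem X_mem_wId (c : Fin N → ℕ) (j : Fin N) (hj : 1 ≤ c j) :
    (X j : MvPolynomial (Fin N) K) ∈ wId K N c 1 := by
  intro s hs
  rw [MvPolynomial.support_X, Finset.mem_singleton] at hs
  subst hs
  calc 1 ≤ c j * 1 := by omega
  _ = c j * (Finsupp.single j 1) j := by simp
  _ ≤ ∑ v, c v * (Finsupp.single j 1) v :=
      Finset.single_le_sum (f := fun v => c v * (Finsupp.single j 1) v) (fun v _ => Nat.zero_le _) (Finset.mem_univ j)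

theorem span_pow_le_wId (c : Fin N → ℕ) (S : Set (MvPolynomial (Fin N) K))
    (hS : ∀ g ∈ S, ∃ j, g = X j ∧ 1 ≤ c j) (m : ℕ) :
    (Ideal.span S) ^ m ≤ wId K N c m := by
  induction m with
  | zero => intro f _ s _; exact Nat.zero_le _
  | succ m ih =>
      rw [pow_succ]
      calc Ideal.span S ^ m * Ideal.span S ≤ wId K N c m * wId K N c 1 := by
            refine Ideal.mul_le.2 fun f hf g hg => Ideal.mul_mem_mul (ih hf) ?_
            have : Ideal.span S ≤ wId K N c 1 := by
              rw [Ideal.span_le]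
              intro g hg
              rcases hS g hg with ⟨j, rfl, hj⟩
              exact X_mem_wId c j hj
            exact this hg
      _ ≤ wId K N c (m + 1) := wId_mul_le c m 1

theorem prod_mem_pow {R : Type*} [CommRing R] {ι : Type*} (I : Ideal R) (t : Finset ι)
    (g : ι → R) (h : ∀ i ∈ t, g i ∈ I) : ∏ i ∈ t, g i ∈ I ^ t.card := by
  have := Ideal.prod_mem_prod (I := fun _ : ι => I) (x := g) (s := t) h
  simpa using this

theorem modEq_inj {n a k1 k2 : ℕ} (h1 : k1 < n) (h2 : k2 < n)
    (h : (k1 + a) % n = (k2 + a) % n) : k1 = k2 := by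
  have h' : k1 ≡ k2 [MOD n] := Nat.ModEq.add_right_cancel' a h
  rwa [Nat.ModEq, Nat.mod_eq_of_lt h1, Nat.mod_eq_of_lt h2] at h'

theorem shift_mem_Icc {n : ℕ} (hn : 1 ≤ n) (x : ℕ) : x % n + 1 ∈ Icc 1 n := by
  have := Nat.mod_lt x (show 0 < n by omega)
  simp only [mem_Icc]; omega

theorem shift_sum_le {n : ℕ} (hn : 1 ≤ n) (k : ℕ) (g : ℕ → ℕ) :
    ∑ i ∈ Icc 1 n, g ((i + k - 1) % n + 1) ≤ ∑ j ∈ Icc 1 n, g j := by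
  have hinj : ∀ x ∈ Icc 1 n, ∀ y ∈ Icc 1 n,
      (x + k - 1) % n + 1 = (y + k - 1) % n + 1 → x = y := by
    intro x hx y hy hxy
    rw [mem_Icc] at hx hy
    have ex : x + k - 1 = (x - 1) + k := by omega
    have ey : y + k - 1 = (y - 1) + k := by omega
    rw [ex, ey] at hxy
    have := modEq_inj (a := k) (show x - 1 < n by omega) (show y - 1 < n by omega)
      (by omega)
    omega
  calc ∑ i ∈ Icc 1 n, g ((i + k - 1) % n + 1)
      = ∑ j ∈ (Icc 1 n).image (fun i => (i + k - 1) % n + 1), g j :=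
        (Finset.sum_image hinj).symm
    _ ≤ ∑ j ∈ Icc 1 n, g j := by
        refine Finset.sum_le_sum_of_subset ?_
        intro j hj
        rcases Finset.mem_image.1 hj with ⟨i, _, rfl⟩
        exact shift_mem_Icc hn _

theorem shift_image_eq {n i : ℕ} (hn : 1 ≤ n) (hi : 1 ≤ i) :
    (range n).image (fun k => (i + k - 1) % n + 1) = Icc 1 n := by
  have hinj : ∀ x ∈ range n, ∀ y ∈ range n,
      (i + x - 1) % n + 1 = (i + y - 1) % n + 1 → x = y := by
    intro x hx y hy hxy
    rw [mem_range] at hx hy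
    have ex : i + x - 1 = x + (i - 1) := by omega
    have ey : i + y - 1 = y + (i - 1) := by omega
    rw [ex, ey] at hxy
    exact modEq_inj (a := i - 1) hx hy (by omega)
  refine Finset.eq_of_subset_of_card_le ?_ ?_
  · intro j hj
    rcases Finset.mem_image.1 hj with ⟨x, _, rfl⟩
    exact shift_mem_Icc hn _
  · rw [Finset.card_image_of_injOn (fun x hx y hy => hinj x hx y hy)]
    simp

theorem shift_prod_eq {M : Type*} [CommMonoid M] {n i : ℕ} (hn : 1 ≤ n) (hi : 1 ≤ i)
    (h : ℕ → M) :
    ∏ j ∈ Icc 1 n, h j = ∏ k ∈ range n, h ((i + k - 1) % n + 1) := by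
  rw [← shift_image_eq hn hi, Finset.prod_image]
  intro x hx y hy hxy
  rw [mem_coe, mem_range] at hx hy; beta_reduce at hxy
  have ex : i + x - 1 = x + (i - 1) := by omega
  have ey : i + y - 1 = y + (i - 1) := by omega
  rw [ex, ey] at hxy
  exact modEq_inj (a := i - 1) hx hy (by omega)

variable {K : Type*} [Field K] {N : ℕ}

theorem prod_X_eq_monomial {ι : Type*} (t : Finset ι) (g : ι → Fin N) :
    ∏ j ∈ t, (X (g j) : MvPolynomial (Fin N) K) =
      monomial (∑ j ∈ t, Finsupp.single (g j) 1) 1 := by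
  classical
  induction t using Finset.induction with
  | empty => simp [monomial_zero']
  | insert a s h ih =>
      rw [Finset.prod_insert h, Finset.sum_insert h, ih]
      rw [show (X (g _) : MvPolynomial (Fin N) K) = monomial (Finsupp.single (g _) 1) 1 from rfl]
      rw [monomial_mul, one_mul]

theorem sum_single_apply {ι : Type*} (t : Finset ι) (g : ι → Fin N) :
    ((∑ j ∈ t, Finsupp.single (g j) 1 : Fin N →₀ ℕ)).sum (fun _ e => e) = t.card := by
  classical
  rw [Finsupp.sum_fintype _ _ (fun _ => rfl)]
  have : ∀ v, (∑ j ∈ t, Finsupp.single (g j) 1 : Fin N →₀ ℕ) v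
      = ∑ j ∈ t, if g j = v then 1 else 0 := by
    intro v
    rw [Finset.sum_apply']
    exact Finset.sum_congr rfl fun j _ => Finsupp.single_apply
  simp_rw [this]
  rw [Finset.sum_comm]
  simp

noncomputable def Fpoly (K : Type*) [Field K] (n : ℕ) (e : ℕ → Fin (n + 2)) :
    MvPolynomial (Fin (n + 2)) K :=
  X (e 0) * X (e (n + 1)) * ∏ j ∈ Finset.Icc 1 n, X (e j)

theorem Fpoly_eq_prod (n : ℕ) (e : ℕ → Fin (n + 2)) :
    Fpoly K n e = ∏ j ∈ insert 0 (insert (n + 1) (Icc 1 n)), X (e j) := by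
  have h0 : (0 : ℕ) ∉ insert (n + 1) (Icc 1 n) := by simp
  have h1 : n + 1 ∉ Icc 1 n := by simp
  rw [Finset.prod_insert h0, Finset.prod_insert h1, Fpoly, mul_assoc]

theorem Fpoly_ne_zero (n : ℕ) (e : ℕ → Fin (n + 2)) : Fpoly K n e ≠ 0 := by
  rw [Fpoly_eq_prod, prod_X_eq_monomial]
  simp [MvPolynomial.monomial_eq_zero]

theorem Fpoly_totalDegree (n : ℕ) (e : ℕ → Fin (n + 2)) :
    (Fpoly K n e).totalDegree = n + 2 := by
  have h0 : (0 : ℕ) ∉ insert (n + 1) (Icc 1 n) := by simp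
  have h1 : n + 1 ∉ Icc 1 n := by simp
  rw [Fpoly_eq_prod, prod_X_eq_monomial, totalDegree_monomial _ one_ne_zero,
    sum_single_apply, Finset.card_insert_of_notMem h0, Finset.card_insert_of_notMem h1,
    Nat.card_Icc]
  omega
section
variable {K : Type*} [Field K]

theorem F_mem_T (n : ℕ) (hn : 3 ≤ n) (e : ℕ → Fin (n + 2)) {i : ℕ} (hi : 1 ≤ i) :
    Fpoly K n e ∈ (Ideal.span ({X (e 0), X (e (n + 1))} ∪
      {p | ∃ k < n - 2, p = (X (e ((i + k - 1) % n + 1)) : MvPolynomial (Fin (n + 2)) K)})) ^ n := by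
  set P := Ideal.span ({X (e 0), X (e (n + 1))} ∪
      {p | ∃ k < n - 2, p = (X (e ((i + k - 1) % n + 1)) : MvPolynomial (Fin (n + 2)) K)}) with hP
  have hA : (X (e 0) : MvPolynomial (Fin (n + 2)) K) ∈ P :=
    Ideal.subset_span (Or.inl (by simp))
  have hB : (X (e (n + 1)) : MvPolynomial (Fin (n + 2)) K) ∈ P :=
    Ideal.subset_span (Or.inl (by simp))
  have hC : ∏ k ∈ range (n - 2), (X (e ((i + k - 1) % n + 1)) : MvPolynomial (Fin (n + 2)) K)
      ∈ P ^ (n - 2) := by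
    have := prod_mem_pow P (range (n - 2))
      (fun k => (X (e ((i + k - 1) % n + 1)) : MvPolynomial (Fin (n + 2)) K))
      (fun k hk => Ideal.subset_span (Or.inr ⟨k, mem_range.1 hk, rfl⟩))
    simpa using this
  have hsplit : ∏ j ∈ Icc 1 n, (X (e j) : MvPolynomial (Fin (n + 2)) K) =
      (∏ k ∈ range (n - 2), X (e ((i + k - 1) % n + 1))) *
        ∏ k ∈ Ico (n - 2) n, X (e ((i + k - 1) % n + 1)) := by
    rw [shift_prod_eq (by omega) hi, range_eq_Ico, range_eq_Ico]
    exact (Finset.prod_Ico_consecutive _ (Nat.zero_le (n - 2)) (by omega)).symm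
  have key : (X (e 0) : MvPolynomial (Fin (n + 2)) K) * X (e (n + 1)) *
      ∏ k ∈ range (n - 2), X (e ((i + k - 1) % n + 1)) ∈ P ^ n := by
    have h2 := Ideal.mul_mem_mul (Ideal.mul_mem_mul hA hB) hC
    have hpow : P * P * P ^ (n - 2) = P ^ n := by
      rw [← pow_two, ← pow_add]
      congr 1
      omega
    rwa [hpow] at h2
  have hFeq : Fpoly K n e = (X (e 0) * X (e (n + 1)) *
      ∏ k ∈ range (n - 2), X (e ((i + k - 1) % n + 1))) *
        ∏ k ∈ Ico (n - 2) n, X (e ((i + k - 1) % n + 1)) := by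
    rw [Fpoly, hsplit]; ring
  rw [hFeq]
  exact Ideal.mul_mem_right _ _ key

theorem F_mem_S0 (n : ℕ) (hn : 3 ≤ n) (e : ℕ → Fin (n + 2)) {i : ℕ} (hi : 1 ≤ i) :
    Fpoly K n e ∈ (Ideal.span ({X (e 0)} ∪
      {p | ∃ k < n - 1, p = (X (e ((i + k - 1) % n + 1)) : MvPolynomial (Fin (n + 2)) K)})) ^ n := by
  set P := Ideal.span ({X (e 0)} ∪
      {p | ∃ k < n - 1, p = (X (e ((i + k - 1) % n + 1)) : MvPolynomial (Fin (n + 2)) K)}) with hP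
  have hA : (X (e 0) : MvPolynomial (Fin (n + 2)) K) ∈ P :=
    Ideal.subset_span (Or.inl (by simp))
  have hC : ∏ k ∈ range (n - 1), (X (e ((i + k - 1) % n + 1)) : MvPolynomial (Fin (n + 2)) K)
      ∈ P ^ (n - 1) := by
    have := prod_mem_pow P (range (n - 1))
      (fun k => (X (e ((i + k - 1) % n + 1)) : MvPolynomial (Fin (n + 2)) K))
      (fun k hk => Ideal.subset_span (Or.inr ⟨k, mem_range.1 hk, rfl⟩))
    simpa using this
  have hsplit : ∏ j ∈ Icc 1 n, (X (e j) : MvPolynomial (Fin (n + 2)) K) =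
      (∏ k ∈ range (n - 1), X (e ((i + k - 1) % n + 1))) *
        ∏ k ∈ Ico (n - 1) n, X (e ((i + k - 1) % n + 1)) := by
    rw [shift_prod_eq (by omega) hi, range_eq_Ico, range_eq_Ico]
    exact (Finset.prod_Ico_consecutive _ (Nat.zero_le (n - 1)) (by omega)).symm
  have key : (X (e 0) : MvPolynomial (Fin (n + 2)) K) *
      ∏ k ∈ range (n - 1), X (e ((i + k - 1) % n + 1)) ∈ P ^ n := by
    have h2 := Ideal.mul_mem_mul hA hC
    have hpow : P * P ^ (n - 1) = P ^ n := by
      rw [← pow_succ']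
      congr 1
      omega
    rwa [hpow] at h2
  have hFeq : Fpoly K n e = (X (e 0) *
      ∏ k ∈ range (n - 1), X (e ((i + k - 1) % n + 1))) *
        (X (e (n + 1)) * ∏ k ∈ Ico (n - 1) n, X (e ((i + k - 1) % n + 1))) := by
    rw [Fpoly, hsplit]; ring
  rw [hFeq]
  exact Ideal.mul_mem_right _ _ key

theorem F_mem_S1 (n : ℕ) (hn : 3 ≤ n) (e : ℕ → Fin (n + 2)) {i : ℕ} (hi : 1 ≤ i) :
    Fpoly K n e ∈ (Ideal.span ({X (e (n + 1))} ∪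
      {p | ∃ k < n - 1, p = (X (e ((i + k - 1) % n + 1)) : MvPolynomial (Fin (n + 2)) K)})) ^ n := by
  set P := Ideal.span ({X (e (n + 1))} ∪
      {p | ∃ k < n - 1, p = (X (e ((i + k - 1) % n + 1)) : MvPolynomial (Fin (n + 2)) K)}) with hP
  have hA : (X (e (n + 1)) : MvPolynomial (Fin (n + 2)) K) ∈ P :=
    Ideal.subset_span (Or.inl (by simp))
  have hC : ∏ k ∈ range (n - 1), (X (e ((i + k - 1) % n + 1)) : MvPolynomial (Fin (n + 2)) K)
      ∈ P ^ (n - 1) := by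
    have := prod_mem_pow P (range (n - 1))
      (fun k => (X (e ((i + k - 1) % n + 1)) : MvPolynomial (Fin (n + 2)) K))
      (fun k hk => Ideal.subset_span (Or.inr ⟨k, mem_range.1 hk, rfl⟩))
    simpa using this
  have hsplit : ∏ j ∈ Icc 1 n, (X (e j) : MvPolynomial (Fin (n + 2)) K) =
      (∏ k ∈ range (n - 1), X (e ((i + k - 1) % n + 1))) *
        ∏ k ∈ Ico (n - 1) n, X (e ((i + k - 1) % n + 1)) := by
    rw [shift_prod_eq (by omega) hi, range_eq_Ico, range_eq_Ico]
    exact (Finset.prod_Ico_consecutive _ (Nat.zero_le (n - 1)) (by omega)).symm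
  have key : (X (e (n + 1)) : MvPolynomial (Fin (n + 2)) K) *
      ∏ k ∈ range (n - 1), X (e ((i + k - 1) % n + 1)) ∈ P ^ n := by
    have h2 := Ideal.mul_mem_mul hA hC
    have hpow : P * P ^ (n - 1) = P ^ n := by
      rw [← pow_succ']
      congr 1
      omega
    rwa [hpow] at h2
  have hFeq : Fpoly K n e = (X (e (n + 1)) *
      ∏ k ∈ range (n - 1), X (e ((i + k - 1) % n + 1))) *
        (X (e 0) * ∏ k ∈ Ico (n - 1) n, X (e ((i + k - 1) % n + 1))) := by
    rw [Fpoly, hsplit]; ring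
  rw [hFeq]
  exact Ideal.mul_mem_right _ _ key

theorem F_mem_D (n : ℕ) (hn : 3 ≤ n) (e : ℕ → Fin (n + 2)) :
    Fpoly K n e ∈
      (Ideal.span {p | ∃ j ∈ Finset.Icc 1 n, p = (X (e j) : MvPolynomial (Fin (n + 2)) K)}) ^ n := by
  set P := Ideal.span {p | ∃ j ∈ Finset.Icc 1 n, p = (X (e j) : MvPolynomial (Fin (n + 2)) K)}
  have hC : ∏ j ∈ Icc 1 n, (X (e j) : MvPolynomial (Fin (n + 2)) K) ∈ P ^ n := by
    have := prod_mem_pow P (Icc 1 n)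
      (fun j => (X (e j) : MvPolynomial (Fin (n + 2)) K))
      (fun j hj => Ideal.subset_span ⟨j, hj, rfl⟩)
    rw [Nat.card_Icc] at this
    simpa using this
  have hFeq : Fpoly K n e = (X (e 0) * X (e (n + 1))) *
      ∏ j ∈ Icc 1 n, (X (e j) : MvPolynomial (Fin (n + 2)) K) := by
    rw [Fpoly]
  rw [hFeq]
  exact Ideal.mul_mem_left _ _ hC

end
section
variable {K : Type*} [Field K]

theorem sum_univ_split (n : ℕ) (e : ℕ → Fin (n + 2)) (he : ∀ k, (e k : ℕ) = k % (n + 2))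
    (g : Fin (n + 2) → ℕ) :
    ∑ v, g v = g (e 0) + g (e (n + 1)) + ∑ j ∈ Icc 1 n, g (e j) := by
  have hval : ∀ v : Fin (n + 2), e (v : ℕ) = v := by
    intro v
    have := he (v : ℕ)
    exact Fin.ext (by rw [this, Nat.mod_eq_of_lt v.isLt])
  have h1 : ∑ v, g v = ∑ j ∈ range (n + 2), g (e j) := by
    rw [← Fin.sum_univ_eq_sum_range (fun j => g (e j)) (n + 2)]
    exact Finset.sum_congr rfl fun v _ => by rw [hval v]
  have h2 : range (n + 2) = insert 0 (insert (n + 1) (Icc 1 n)) := by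
    ext x
    simp only [mem_range, mem_insert, mem_Icc]
    omega
  rw [h1, h2, Finset.sum_insert (by simp), Finset.sum_insert (by simp)]
  ring

theorem lower_bound (n : ℕ) (hn : 3 ≤ n) (e : ℕ → Fin (n + 2))
    (he : ∀ k, (e k : ℕ) = k % (n + 2)) (m : ℕ)
    (f : MvPolynomial (Fin (n + 2)) K) (hf0 : f ≠ 0)
    (hfA : ∀ i ∈ Icc 1 n, f ∈ (Ideal.span ({X (e 0), X (e (n + 1))} ∪
      {p | ∃ k < n - 2, p = (X (e ((i + k - 1) % n + 1)) : MvPolynomial (Fin (n + 2)) K)})) ^ m)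
    (hfD : f ∈ (Ideal.span
      {p | ∃ j ∈ Finset.Icc 1 n, p = (X (e j) : MvPolynomial (Fin (n + 2)) K)}) ^ m) :
    (n + 2) * m ≤ n * f.totalDegree := by
  classical
  obtain ⟨s, hs⟩ : f.support.Nonempty := by
    rw [Finset.nonempty_iff_ne_empty]
    simpa [MvPolynomial.support_eq_empty] using hf0
  -- key bound from the T-primes
  have key : ∀ i ∈ Icc 1 n, m ≤ s (e 0) + s (e (n + 1)) +
      ∑ k ∈ range (n - 2), s (e ((i + k - 1) % n + 1)) := by
    intro i hi
    set c : Fin (n + 2) → ℕ := fun v =>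
      (if v = e 0 then 1 else 0) + (if v = e (n + 1) then 1 else 0) +
        ∑ k ∈ range (n - 2), if v = e ((i + k - 1) % n + 1) then 1 else 0 with hc
    have hgen : ∀ g ∈ ({X (e 0), X (e (n + 1))} ∪
        {p | ∃ k < n - 2, p = (X (e ((i + k - 1) % n + 1)) : MvPolynomial (Fin (n + 2)) K)}),
        ∃ j, g = X j ∧ 1 ≤ c j := by
      rintro g (hg | ⟨k, hk, rfl⟩)
      · rcases hg with hg | hg
        · refine ⟨e 0, hg, ?_⟩
          simp only [hc]
          rw [if_true]
          omega
        · refine ⟨e (n + 1), hg, ?_⟩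
          simp only [hc]
          rw [if_true]
          omega
      · refine ⟨e ((i + k - 1) % n + 1), rfl, ?_⟩
        have h1 : (if e ((i + k - 1) % n + 1) = e ((i + k - 1) % n + 1) then (1 : ℕ) else 0)
            = 1 := if_pos rfl
        have h2 : (if e ((i + k - 1) % n + 1) = e ((i + k - 1) % n + 1) then (1 : ℕ) else 0) ≤
            ∑ k' ∈ range (n - 2),
              if e ((i + k - 1) % n + 1) = e ((i + k' - 1) % n + 1) then 1 else 0 :=
          Finset.single_le_sum
            (f := fun k' => if e ((i + k - 1) % n + 1) = e ((i + k' - 1) % n + 1) then (1:ℕ) else 0)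
            (fun _ _ => Nat.zero_le _) (mem_range.2 hk)
        simp only [hc]
        omega
    have hw := span_pow_le_wId c _ hgen m (hfA i hi) s hs
    have hsum : ∑ v, c v * s v = s (e 0) + s (e (n + 1)) +
        ∑ k ∈ range (n - 2), s (e ((i + k - 1) % n + 1)) := by
      simp only [hc, add_mul, Finset.sum_mul, ite_mul, one_mul, zero_mul]
      rw [Finset.sum_add_distrib, Finset.sum_add_distrib]
      congr 1
      · congr 1
        · rw [Finset.sum_ite_eq' univ (e 0) (fun v => s v), if_pos (mem_univ _)]
        · rw [Finset.sum_ite_eq' univ (e (n + 1)) (fun v => s v), if_pos (mem_univ _)]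
      · rw [Finset.sum_comm]
        exact Finset.sum_congr rfl fun k _ => by
          rw [Finset.sum_ite_eq' univ (e ((i + k - 1) % n + 1)) (fun v => s v),
            if_pos (mem_univ _)]
    omega
  -- key bound from the cycle prime
  have keyD : m ≤ ∑ j ∈ Icc 1 n, s (e j) := by
    set c : Fin (n + 2) → ℕ := fun v => ∑ j ∈ Icc 1 n, if v = e j then 1 else 0 with hc
    have hgen : ∀ g ∈ {p | ∃ j ∈ Finset.Icc 1 n,
        p = (X (e j) : MvPolynomial (Fin (n + 2)) K)}, ∃ j, g = X j ∧ 1 ≤ c j := by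
      rintro g ⟨j, hj, rfl⟩
      refine ⟨e j, rfl, ?_⟩
      have h1 : (1 : ℕ) = if e j = e j then 1 else 0 := (if_pos rfl).symm
      have h2 : (if e j = e j then 1 else 0) ≤ ∑ j' ∈ Icc 1 n, if e j = e j' then 1 else 0 :=
        Finset.single_le_sum (f := fun j' => if e j = e j' then 1 else 0)
          (fun _ _ => Nat.zero_le _) hj
      simp only [hc]
      omega
    have hw := span_pow_le_wId c _ hgen m hfD s hs
    have hsum : ∑ v, c v * s v = ∑ j ∈ Icc 1 n, s (e j) := by
      simp only [hc, Finset.sum_mul, ite_mul, one_mul, zero_mul]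
      rw [Finset.sum_comm]
      exact Finset.sum_congr rfl fun j _ => by
        rw [Finset.sum_ite_eq' univ (e j) (fun v => s v), if_pos (mem_univ _)]
    omega
  set a := s (e 0)
  set b := s (e (n + 1))
  set W := ∑ j ∈ Icc 1 n, s (e j) with hW
  have h1 : n * m ≤ n * (a + b) +
      ∑ i ∈ Icc 1 n, ∑ k ∈ range (n - 2), s (e ((i + k - 1) % n + 1)) := by
    calc n * m = ∑ _i ∈ Icc 1 n, m := by
          rw [Finset.sum_const, Nat.card_Icc, smul_eq_mul, Nat.add_sub_cancel]
    _ ≤ ∑ i ∈ Icc 1 n, (a + b + ∑ k ∈ range (n - 2), s (e ((i + k - 1) % n + 1))) :=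
          Finset.sum_le_sum key
    _ = n * (a + b) + ∑ i ∈ Icc 1 n, ∑ k ∈ range (n - 2), s (e ((i + k - 1) % n + 1)) := by
          rw [Finset.sum_add_distrib, Finset.sum_const, Nat.card_Icc, smul_eq_mul,
            Nat.add_sub_cancel]
  have h2 : ∑ i ∈ Icc 1 n, ∑ k ∈ range (n - 2), s (e ((i + k - 1) % n + 1)) ≤ (n - 2) * W := by
    rw [Finset.sum_comm]
    calc ∑ k ∈ range (n - 2), ∑ i ∈ Icc 1 n, s (e ((i + k - 1) % n + 1))
        ≤ ∑ _k ∈ range (n - 2), W :=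
          Finset.sum_le_sum fun k _ => shift_sum_le (by omega) k (fun j => s (e j))
    _ = (n - 2) * W := by rw [Finset.sum_const, card_range, smul_eq_mul]
  have hd : a + b + W ≤ f.totalDegree := by
    have h3 : (s.sum fun _ x => x) ≤ f.totalDegree := le_totalDegree hs
    have h4 : (s.sum fun _ x => x) = ∑ v, s v := Finsupp.sum_fintype _ _ fun _ => rfl
    have h5 := sum_univ_split n e he (fun v => s v)
    omega
  have hnm : n * m ≤ n * (a + b) + (n - 2) * W := le_trans h1 (Nat.add_le_add_left h2 _)
  have e1 : (n - 2) + 2 = n := by omega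
  calc (n + 2) * m = n * m + 2 * m := by ring
  _ ≤ (n * (a + b) + (n - 2) * W) + 2 * W := Nat.add_le_add hnm (Nat.mul_le_mul_left 2 keyD)
  _ = n * (a + b) + ((n - 2) + 2) * W := by ring
  _ = n * (a + b + W) := by rw [e1]; ring
  _ ≤ n * f.totalDegree := Nat.mul_le_mul_left n hd

end


theorem final_calc (n : ℕ) (hn : 3 ≤ n) (α : ℕ → ℕ)
    (hlow : ∀ m, 1 ≤ m → (n + 2) * m ≤ n * α m) (hup : α n ≤ n + 2) :
    sInf {x : ℝ | ∃ m : ℕ, 1 ≤ m ∧ x = ((α m : ℕ) : ℝ) / m} = ((n : ℝ) + 2) / (n : ℝ) := by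
  have hn0 : (0 : ℝ) < n := by
    have : 0 < n := by omega
    exact_mod_cast this
  have hlb : ∀ x ∈ {x : ℝ | ∃ m : ℕ, 1 ≤ m ∧ x = ((α m : ℕ) : ℝ) / m},
      ((n : ℝ) + 2) / n ≤ x := by
    rintro x ⟨m, hm, rfl⟩
    have hm0 : (0 : ℝ) < m := by
      have : (1 : ℝ) ≤ (m : ℝ) := by exact_mod_cast hm
      linarith
    rw [div_le_div_iff₀ hn0 hm0]
    calc ((n : ℝ) + 2) * m = (((n + 2) * m : ℕ) : ℝ) := by push_cast; ring
    _ ≤ ((n * α m : ℕ) : ℝ) := by exact_mod_cast hlow m hm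
    _ = (α m : ℝ) * n := by push_cast; ring
  have hmemn : ((α n : ℕ) : ℝ) / n ∈ {x : ℝ | ∃ m : ℕ, 1 ≤ m ∧ x = ((α m : ℕ) : ℝ) / m} :=
    ⟨n, by omega, rfl⟩
  refine le_antisymm (le_trans (csInf_le ⟨_, hlb⟩ hmemn) ?_) (le_csInf ⟨_, hmemn⟩ hlb)
  gcongr
  exact_mod_cast hup


end auxWald

/-- For `n ≥ 3`, the Waldschmidt constant of the Stanley-Reisner ideal `I_{D_n}` of the
bipyramidal graph `D_n` equals `(n+2)/n`: the infimum over `m ≥ 1` of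
`α(I_{D_n}^{(m)})/m` is `(n+2)/n`, where the `m`-th symbolic power is the intersection
of the `m`-th powers of the primes `⟨x_0, x_{n+1}, T_i⟩`, `⟨x_0, S_i⟩`,
`⟨x_{n+1}, S_i⟩` (for `i = 1,…,n`) and `⟨x_1,…,x_n⟩`, with `S_i = {x_i,…,x_{i+n-2}}`,
`T_i = {x_i,…,x_{i+n-3}}` (cyclic indices modulo `n`), and `α` is the least degree of a
nonzero element. -/
theorem stmt15 (K : Type*) [Field K] (n : ℕ) (hn : 3 ≤ n)
    (e : ℕ → Fin (n + 2)) (he : ∀ k, (e k : ℕ) = k % (n + 2))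
    (sym : ℕ → Ideal (MvPolynomial (Fin (n + 2)) K))
    (hsym : ∀ m, sym m =
      (⨅ i ∈ Finset.Icc 1 n,
        (Ideal.span ({X (e 0), X (e (n + 1))} ∪
          {p | ∃ k < n - 2, p = (X (e ((i + k - 1) % n + 1)) : MvPolynomial (Fin (n + 2)) K)}))
          ^ m) ⊓
      (⨅ i ∈ Finset.Icc 1 n,
        (Ideal.span ({X (e 0)} ∪
          {p | ∃ k < n - 1, p = (X (e ((i + k - 1) % n + 1)) : MvPolynomial (Fin (n + 2)) K)}))
          ^ m) ⊓
      (⨅ i ∈ Finset.Icc 1 n,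
        (Ideal.span ({X (e (n + 1))} ∪
          {p | ∃ k < n - 1, p = (X (e ((i + k - 1) % n + 1)) : MvPolynomial (Fin (n + 2)) K)}))
          ^ m) ⊓
      (Ideal.span {p | ∃ j ∈ Finset.Icc 1 n, p = (X (e j) : MvPolynomial (Fin (n + 2)) K)})
        ^ m) :
    sInf {x : ℝ | ∃ m : ℕ, 1 ≤ m ∧
        x = ((sInf {d : ℕ | ∃ f ∈ sym m, f ≠ 0 ∧ f.totalDegree = d} : ℕ) : ℝ) / m}
      = ((n : ℝ) + 2) / (n : ℝ) := by
  have hFne : Fpoly K n e ≠ 0 := Fpoly_ne_zero n e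
  -- Fpoly lies in each of the primes
  have hF1 : ∀ i ∈ Finset.Icc 1 n, Fpoly K n e ∈ Ideal.span ({X (e 0), X (e (n + 1))} ∪
      {p | ∃ k < n - 2, p = (X (e ((i + k - 1) % n + 1)) : MvPolynomial (Fin (n + 2)) K)}) :=
    fun i hi => Ideal.pow_le_self (by omega)
      (F_mem_T n hn e (Finset.mem_Icc.1 hi).1)
  have hF2 : ∀ i ∈ Finset.Icc 1 n, Fpoly K n e ∈ Ideal.span ({X (e 0)} ∪
      {p | ∃ k < n - 1, p = (X (e ((i + k - 1) % n + 1)) : MvPolynomial (Fin (n + 2)) K)}) :=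
    fun i hi => Ideal.pow_le_self (by omega)
      (F_mem_S0 n hn e (Finset.mem_Icc.1 hi).1)
  have hF3 : ∀ i ∈ Finset.Icc 1 n, Fpoly K n e ∈ Ideal.span ({X (e (n + 1))} ∪
      {p | ∃ k < n - 1, p = (X (e ((i + k - 1) % n + 1)) : MvPolynomial (Fin (n + 2)) K)}) :=
    fun i hi => Ideal.pow_le_self (by omega)
      (F_mem_S1 n hn e (Finset.mem_Icc.1 hi).1)
  have hF4 : Fpoly K n e ∈
      Ideal.span {p | ∃ j ∈ Finset.Icc 1 n, p = (X (e j) : MvPolynomial (Fin (n + 2)) K)} :=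
    Ideal.pow_le_self (by omega) (F_mem_D n hn e)
  have hFmem : ∀ m, Fpoly K n e ^ m ∈ sym m := by
    intro m
    rw [hsym m]
    refine Submodule.mem_inf.2 ⟨Submodule.mem_inf.2 ⟨Submodule.mem_inf.2 ⟨?_, ?_⟩, ?_⟩, ?_⟩
    · exact Ideal.mem_iInf.2 fun i => Ideal.mem_iInf.2 fun hi =>
        Ideal.pow_mem_pow (hF1 i hi) m
    · exact Ideal.mem_iInf.2 fun i => Ideal.mem_iInf.2 fun hi =>
        Ideal.pow_mem_pow (hF2 i hi) m
    · exact Ideal.mem_iInf.2 fun i => Ideal.mem_iInf.2 fun hi =>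
        Ideal.pow_mem_pow (hF3 i hi) m
    · exact Ideal.pow_mem_pow hF4 m
  have hFn : Fpoly K n e ∈ sym n := by
    rw [hsym n]
    refine Submodule.mem_inf.2 ⟨Submodule.mem_inf.2 ⟨Submodule.mem_inf.2 ⟨?_, ?_⟩, ?_⟩, ?_⟩
    · exact Ideal.mem_iInf.2 fun i => Ideal.mem_iInf.2 fun hi =>
        F_mem_T n hn e (Finset.mem_Icc.1 hi).1
    · exact Ideal.mem_iInf.2 fun i => Ideal.mem_iInf.2 fun hi =>
        F_mem_S0 n hn e (Finset.mem_Icc.1 hi).1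
    · exact Ideal.mem_iInf.2 fun i => Ideal.mem_iInf.2 fun hi =>
        F_mem_S1 n hn e (Finset.mem_Icc.1 hi).1
    · exact F_mem_D n hn e
  have hne : ∀ m, {d : ℕ | ∃ f ∈ sym m, f ≠ 0 ∧ f.totalDegree = d}.Nonempty :=
    fun m => ⟨(Fpoly K n e ^ m).totalDegree, Fpoly K n e ^ m, hFmem m,
      pow_ne_zero m hFne, rfl⟩
  have hlow : ∀ m, 1 ≤ m →
      (n + 2) * m ≤ n * sInf {d : ℕ | ∃ f ∈ sym m, f ≠ 0 ∧ f.totalDegree = d} := by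
    intro m _
    obtain ⟨f, hf, hf0, hdeg⟩ := Nat.sInf_mem (hne m)
    rw [hsym m, Submodule.mem_inf, Submodule.mem_inf, Submodule.mem_inf] at hf
    obtain ⟨⟨⟨hfA, _⟩, _⟩, hfD⟩ := hf
    have hfA' : ∀ i ∈ Finset.Icc 1 n, f ∈ (Ideal.span ({X (e 0), X (e (n + 1))} ∪
        {p | ∃ k < n - 2,
          p = (X (e ((i + k - 1) % n + 1)) : MvPolynomial (Fin (n + 2)) K)})) ^ m :=
      fun i hi => Ideal.mem_iInf.1 (Ideal.mem_iInf.1 hfA i) hi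
    exact hdeg ▸ lower_bound n hn e he m f hf0 hfA' hfD
  have hup : sInf {d : ℕ | ∃ f ∈ sym n, f ≠ 0 ∧ f.totalDegree = d} ≤ n + 2 :=
    Nat.sInf_le ⟨Fpoly K n e, hFn, hFne, Fpoly_totalDegree n e⟩
  exact final_calc n hn
    (fun m => sInf {d : ℕ | ∃ f ∈ sym m, f ≠ 0 ∧ f.totalDegree = d}) hlow hup
end

section
/- The monomial x_1 x_2 x_3 x_4 of degree 4 lies in the second symbolic power of I_{B_4} = ⟨x_0x_5, x_1x_3, x_2x_4⟩ ⊂ K[x_0,...,x_5], i.e., it lies in P^2 for each of the eight minimal primes P of I_{B_4}, while no monomial of degree at most 3 lies in this second symbolic power; hence α(I_{B_4}^{(2)}) = 4. -/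
open MvPolynomial

private lemma key_lemma_s17 {K : Type*} [Field K] (i j k : Fin 6)
    {f : MvPolynomial (Fin 6) K}
    (hf : f ∈ Ideal.span {(X i : MvPolynomial (Fin 6) K), X j, X k} ^ 2) :
    ∀ m ∈ f.support, 2 ≤ m i + m j + m k := by
  have hspan : ({(X i : MvPolynomial (Fin 6) K), X j, X k} : Set _) = X '' {i, j, k} := by
    simp [Set.image_insert_eq]
  have hI : ∀ p : MvPolynomial (Fin 6) K,
      p ∈ Ideal.span {(X i : MvPolynomial (Fin 6) K), X j, X k} →
      ∀ m ∈ p.support, 1 ≤ m i + m j + m k := by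
    intro p hp m hm
    rw [hspan, mem_ideal_span_X_image] at hp
    obtain ⟨l, hl, hne⟩ := hp m hm
    rcases hl with rfl | rfl | rfl <;> omega
  rw [pow_two] at hf
  refine Submodule.mul_induction_on hf ?_ ?_
  · intro p hp q hq m hm
    have hsub := MvPolynomial.support_mul p q hm
    obtain ⟨a, ha, b, hb, rfl⟩ := Finset.mem_add.mp hsub
    have h1 := hI p hp a ha
    have h2 := hI q hq b hb
    simp only [Finsupp.add_apply]
    omega
  · intro x y hx hy m hm
    rcases Finset.mem_union.mp (MvPolynomial.support_add hm) with h | h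
    · exact hx m h
    · exact hy m h

private lemma mem_sq {K : Type*} [Field K] {p q : MvPolynomial (Fin 6) K}
    {S : Set (MvPolynomial (Fin 6) K)} (hp : p ∈ S) (hq : q ∈ S)
    (r : MvPolynomial (Fin 6) K) : r * (p * q) ∈ Ideal.span S ^ 2 := by
  rw [pow_two]
  exact Ideal.mul_mem_left _ r
    (Ideal.mul_mem_mul (Ideal.subset_span hp) (Ideal.subset_span hq))

/-- The monomial `x_1 x_2 x_3 x_4` lies in the second symbolic power of `I_{B_4}` (the
intersection of the squares of its eight minimal primes), no monomial of degree at most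
`3` lies in this second symbolic power, and hence `α(I_{B_4}^{(2)}) = 4`. -/
theorem stmt17 (K : Type*) [Field K]
    (sym2 : Ideal (MvPolynomial (Fin 6) K))
    (hsym2 : sym2 =
      Ideal.span {(X 0 : MvPolynomial (Fin 6) K), X 1, X 2} ^ 2 ⊓
      Ideal.span {(X 0 : MvPolynomial (Fin 6) K), X 2, X 3} ^ 2 ⊓
      Ideal.span {(X 0 : MvPolynomial (Fin 6) K), X 3, X 4} ^ 2 ⊓
      Ideal.span {(X 0 : MvPolynomial (Fin 6) K), X 1, X 4} ^ 2 ⊓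
      Ideal.span {(X 1 : MvPolynomial (Fin 6) K), X 2, X 5} ^ 2 ⊓
      Ideal.span {(X 2 : MvPolynomial (Fin 6) K), X 3, X 5} ^ 2 ⊓
      Ideal.span {(X 3 : MvPolynomial (Fin 6) K), X 4, X 5} ^ 2 ⊓
      Ideal.span {(X 1 : MvPolynomial (Fin 6) K), X 4, X 5} ^ 2) :
    (X 1 * X 2 * X 3 * X 4 : MvPolynomial (Fin 6) K) ∈ sym2 ∧
    (∀ (a : Fin 6 →₀ ℕ) (c : K), c ≠ 0 →
      (monomial a c : MvPolynomial (Fin 6) K) ∈ sym2 → 4 ≤ ∑ j, a j) ∧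
    sInf {d : ℕ | ∃ f ∈ sym2, f ≠ 0 ∧ f.totalDegree = d} = 4 := by
  -- membership of x1 x2 x3 x4
  have hmem : (X 1 * X 2 * X 3 * X 4 : MvPolynomial (Fin 6) K) ∈ sym2 := by
    rw [hsym2]
    refine ⟨⟨⟨⟨⟨⟨⟨?_, ?_⟩, ?_⟩, ?_⟩, ?_⟩, ?_⟩, ?_⟩, ?_⟩
    · have := mem_sq (p := (X 1 : MvPolynomial (Fin 6) K)) (q := X 2)
        (S := {(X 0 : MvPolynomial (Fin 6) K), X 1, X 2}) (by simp) (by simp) (X 3 * X 4)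
      show _ ∈ (_ : Ideal (MvPolynomial (Fin 6) K)); convert this using 1; ring
    · have := mem_sq (p := (X 2 : MvPolynomial (Fin 6) K)) (q := X 3)
        (S := {(X 0 : MvPolynomial (Fin 6) K), X 2, X 3}) (by simp) (by simp) (X 1 * X 4)
      show _ ∈ (_ : Ideal (MvPolynomial (Fin 6) K)); convert this using 1; ring
    · have := mem_sq (p := (X 3 : MvPolynomial (Fin 6) K)) (q := X 4)
        (S := {(X 0 : MvPolynomial (Fin 6) K), X 3, X 4}) (by simp) (by simp) (X 1 * X 2)
      show _ ∈ (_ : Ideal (MvPolynomial (Fin 6) K)); convert this using 1; ring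
    · have := mem_sq (p := (X 1 : MvPolynomial (Fin 6) K)) (q := X 4)
        (S := {(X 0 : MvPolynomial (Fin 6) K), X 1, X 4}) (by simp) (by simp) (X 2 * X 3)
      show _ ∈ (_ : Ideal (MvPolynomial (Fin 6) K)); convert this using 1; ring
    · have := mem_sq (p := (X 1 : MvPolynomial (Fin 6) K)) (q := X 2)
        (S := {(X 1 : MvPolynomial (Fin 6) K), X 2, X 5}) (by simp) (by simp) (X 3 * X 4)
      show _ ∈ (_ : Ideal (MvPolynomial (Fin 6) K)); convert this using 1; ring
    · have := mem_sq (p := (X 2 : MvPolynomial (Fin 6) K)) (q := X 3)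
        (S := {(X 2 : MvPolynomial (Fin 6) K), X 3, X 5}) (by simp) (by simp) (X 1 * X 4)
      show _ ∈ (_ : Ideal (MvPolynomial (Fin 6) K)); convert this using 1; ring
    · have := mem_sq (p := (X 3 : MvPolynomial (Fin 6) K)) (q := X 4)
        (S := {(X 3 : MvPolynomial (Fin 6) K), X 4, X 5}) (by simp) (by simp) (X 1 * X 2)
      show _ ∈ (_ : Ideal (MvPolynomial (Fin 6) K)); convert this using 1; ring
    · have := mem_sq (p := (X 1 : MvPolynomial (Fin 6) K)) (q := X 4)
        (S := {(X 1 : MvPolynomial (Fin 6) K), X 4, X 5}) (by simp) (by simp) (X 2 * X 3)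
      show _ ∈ (_ : Ideal (MvPolynomial (Fin 6) K)); convert this using 1; ring
  -- every support element of an element of sym2 has total degree ≥ 4
  have hsupp : ∀ f : MvPolynomial (Fin 6) K, f ∈ sym2 →
      ∀ m ∈ f.support, 4 ≤ ∑ j, m j := by
    intro f hf m hm
    rw [hsym2] at hf
    obtain ⟨⟨⟨⟨⟨⟨⟨h1, h2⟩, h3⟩, h4⟩, h5⟩, h6⟩, h7⟩, h8⟩ := hf
    have k1 := key_lemma_s17 0 1 2 h1 m hm
    have k2 := key_lemma_s17 0 2 3 h2 m hm
    have k3 := key_lemma_s17 0 3 4 h3 m hm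
    have k4 := key_lemma_s17 0 1 4 h4 m hm
    have k5 := key_lemma_s17 1 2 5 h5 m hm
    have k6 := key_lemma_s17 2 3 5 h6 m hm
    have k7 := key_lemma_s17 3 4 5 h7 m hm
    have k8 := key_lemma_s17 1 4 5 h8 m hm
    rw [Fin.sum_univ_six]
    omega
  refine ⟨hmem, ?_, ?_⟩
  · intro a c hc hmon
    have ha : a ∈ (monomial a c : MvPolynomial (Fin 6) K).support := by
      rw [mem_support_iff]
      simpa using hc
    exact hsupp _ hmon a ha
  · have hne : (X 1 * X 2 * X 3 * X 4 : MvPolynomial (Fin 6) K) ≠ 0 := by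
      have : ∀ i : Fin 6, (X i : MvPolynomial (Fin 6) K) ≠ 0 := fun i => X_ne_zero i
      exact mul_ne_zero (mul_ne_zero (mul_ne_zero (this 1) (this 2)) (this 3)) (this 4)
    have hdeg : (X 1 * X 2 * X 3 * X 4 : MvPolynomial (Fin 6) K).totalDegree = 4 := by
      rw [show (X 1 * X 2 * X 3 * X 4 : MvPolynomial (Fin 6) K)
          = monomial (Finsupp.single 1 1 + Finsupp.single 2 1 + Finsupp.single 3 1
            + Finsupp.single 4 1) 1 by
        simp [X, monomial_mul]]
      rw [totalDegree_monomial _ (one_ne_zero)]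
      simp [Finsupp.sum_add_index]
    have h4 : 4 ∈ {d : ℕ | ∃ f ∈ sym2, f ≠ 0 ∧ f.totalDegree = d} :=
      ⟨_, hmem, hne, hdeg⟩
    refine le_antisymm (Nat.sInf_le h4) (le_csInf ⟨4, h4⟩ ?_)
    rintro d ⟨f, hf, hf0, rfl⟩
    obtain ⟨m, hm⟩ := (support_nonempty.mpr hf0)
    calc 4 ≤ ∑ j, m j := hsupp f hf m hm
    _ = m.sum fun _ e => e := by
        rw [Finsupp.sum_fintype]; simp
    _ ≤ f.totalDegree := le_totalDegree hm
end
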